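/- Assume hypotheses (EC) and (UC). (i) For every τ ∈ [0,T) and r ∈ (0,r_T), every optimal control to (NP)^{τ,r} is an optimal control to (TP)^{M(τ,r),r}. (ii) For every r ∈ (0,r_T) and M ≥ M(0,r), every optimal control to (TP)^{M,r} is an optimal control to (NP)^{τ(M,r),r}; furthermore (TP)^{M,r} has the bang-bang property (every optimal control u* satisfies ‖u*(t)‖ = M for a.e. t ∈ (τ(M,r),T)) and its optimal control is unique (any two optimal controls coincide a.e. on (τ(M,r),T)). -/

import Mathlib

open MeasureTheory Set Filter Topology

noncomputable section

variable {H : Type*} [NormedAddCommGroup H] [InnerProductSpace ℂ H] [CompleteSpace H]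
  [SecondCountableTopology H]

/-- `U` is a strongly continuous one-parameter group of unitary operators on `H`,
abstracting the Schrödinger group `e^{-iΔt}`. -/
def IsUnitaryGroup (U : ℝ → H →L[ℂ] H) : Prop :=
  U 0 = ContinuousLinearMap.id ℂ H ∧
  (∀ s t : ℝ, U (s + t) = (U s).comp (U t)) ∧
  (∀ (t : ℝ) (x : H), ‖U t x‖ = ‖x‖) ∧
  ∀ x : H, Continuous fun t : ℝ => U t x

/-- `B` is a nonzero orthogonal projection on `H`, abstracting multiplication by `χ_ω`. -/
def IsOrthProj (B : H →L[ℂ] H) : Prop :=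
  B ≠ 0 ∧ B.comp B = B ∧ ∀ x y : H, (inner ℂ (B x) y : ℂ) = inner ℂ x (B y)

/-- Membership in `L∞((a,b);H)`. -/
def MemLinfty (u : ℝ → H) (a b : ℝ) : Prop :=
  AEStronglyMeasurable u (volume : Measure ℝ) ∧
    ∃ c : ℝ, ∀ᵐ t : ℝ ∂volume, t ∈ Ioo a b → ‖u t‖ ≤ c

/-- Membership in `L∞((0,∞);H)`. -/
def MemLinftyInf (u : ℝ → H) : Prop :=
  AEStronglyMeasurable u (volume : Measure ℝ) ∧
    ∃ c : ℝ, ∀ᵐ t : ℝ ∂volume, t ∈ Ioi (0 : ℝ) → ‖u t‖ ≤ c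

/-- The `L∞((a,b);H)` norm of `u`. -/
def supNorm (u : ℝ → H) (a b : ℝ) : ℝ :=
  sInf {c : ℝ | 0 ≤ c ∧ ∀ᵐ t : ℝ ∂volume, t ∈ Ioo a b → ‖u t‖ ≤ c}

/-- `stateT U B T τ u y₀ = y(T; χ_{(τ,T)}u, y₀)`, the mild solution at time `T` of the
controlled Schrödinger equation with initial state `y₀`, the control acting on `(τ,T)`:
`y(T) = U(T)y₀ + ∫_τ^T U(T-s) B u(s) ds`.  The free state at time `t` starting from `y₀`
with control `u` active from time `0` is `stateT U B t 0 u y₀`. -/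
def stateT (U : ℝ → H →L[ℂ] H) (B : H →L[ℂ] H) (T τ : ℝ) (u : ℝ → H) (y₀ : H) : H :=
  U T y₀ + ∫ s in Ioo τ T, U (T - s) (B (u s))

/-- Hypothesis (EC): `L∞`-exact controllability with cost. -/
def EC (U : ℝ → H →L[ℂ] H) (B : H →L[ℂ] H) : Prop :=
  ∀ τ : ℝ, 0 < τ → ∃ C : ℝ, 0 < C ∧ ∀ y₀ z : H, ∃ u : ℝ → H,
    AEStronglyMeasurable u (volume : Measure ℝ) ∧
    (∀ᵐ t : ℝ ∂volume, t ∈ Ioo 0 τ → ‖u t‖ ≤ C * ‖z - U τ y₀‖) ∧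
    stateT U B τ 0 u y₀ = z

/-- Hypothesis (UC): unique continuation. -/
def UC (U : ℝ → H →L[ℂ] H) (B : H →L[ℂ] H) : Prop :=
  ∀ η : H, η ≠ 0 → volume {t : ℝ | B (U t η) = 0} = 0

/-- The admissible set `U_M` of the minimal time problem `(TOCP)_M`. -/
def UMset (U : ℝ → H →L[ℂ] H) (B : H →L[ℂ] H) (y₀ : H) (M : ℝ) : Set (ℝ → H) :=
  {u | MemLinftyInf u ∧ (∀ᵐ t : ℝ ∂volume, t ∈ Ioi (0 : ℝ) → ‖u t‖ ≤ M) ∧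
    ∃ s : ℝ, 0 < s ∧ stateT U B s 0 u y₀ = 0}

/-- The minimal time `T_M` of `(TOCP)_M`. -/
def Tmin (U : ℝ → H →L[ℂ] H) (B : H →L[ℂ] H) (y₀ : H) (M : ℝ) : ℝ :=
  sInf {s : ℝ | 0 < s ∧ ∃ u ∈ UMset U B y₀ M, stateT U B s 0 u y₀ = 0}

/-- The admissible set `V_T` of the minimal norm problem `(NOCP)_T`. -/
def VTset (U : ℝ → H →L[ℂ] H) (B : H →L[ℂ] H) (y₀ : H) (T : ℝ) : Set (ℝ → H) :=
  {v | MemLinfty v 0 T ∧ stateT U B T 0 v y₀ = 0}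

/-- The minimal norm `M_T` of `(NOCP)_T`. -/
def Mmin (U : ℝ → H →L[ℂ] H) (B : H →L[ℂ] H) (y₀ : H) (T : ℝ) : ℝ :=
  sInf ((fun v : ℝ → H => supNorm v 0 T) '' VTset U B y₀ T)

/-- Hypothesis (BB): bang-bang property of the minimal time problems. -/
def BB (U : ℝ → H →L[ℂ] H) (B : H →L[ℂ] H) : Prop :=
  ∀ y₀ : H, y₀ ≠ 0 → ∀ M : ℝ, 0 < M → ∀ u ∈ UMset U B y₀ M,
    stateT U B (Tmin U B y₀ M) 0 u y₀ = 0 →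
    ∀ᵐ t : ℝ ∂volume, t ∈ Ioo 0 (Tmin U B y₀ M) → ‖u t‖ = M

/-- Hypothesis (ET): existence of optimal controls for the minimal time problems. -/
def ET (U : ℝ → H →L[ℂ] H) (B : H →L[ℂ] H) : Prop :=
  ∀ y₀ : H, y₀ ≠ 0 → ∀ M : ℝ, 0 < M →
    ∃ u ∈ UMset U B y₀ M, stateT U B (Tmin U B y₀ M) 0 u y₀ = 0

/-- The admissible set `U_{M,τ}`. -/
def UadmSet (M τ T : ℝ) : Set (ℝ → H) :=
  {u | MemLinfty u 0 T ∧ ∀ᵐ t : ℝ ∂volume, t ∈ Ioo τ T → ‖u t‖ ≤ M}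

/-- The optimal distance `r(M,τ)` of the optimal target problem `(OP)^{M,τ}`. -/
def rOP (U : ℝ → H →L[ℂ] H) (B : H →L[ℂ] H) (y₀ z_d : H) (T M τ : ℝ) : ℝ :=
  sInf ((fun u : ℝ → H => ‖stateT U B T τ u y₀ - z_d‖) '' UadmSet M τ T)

/-- `u` is an optimal control to `(OP)^{M,τ}`. -/
def IsOptOP (U : ℝ → H →L[ℂ] H) (B : H →L[ℂ] H) (y₀ z_d : H) (T M τ : ℝ) (u : ℝ → H) :
    Prop :=
  u ∈ UadmSet M τ T ∧ ‖stateT U B T τ u y₀ - z_d‖ = rOP U B y₀ z_d T M τ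

/-- `M^τ`, the minimal norm for exact steering to the target `z_d`. -/
def Mtau (U : ℝ → H →L[ℂ] H) (B : H →L[ℂ] H) (y₀ z_d : H) (T τ : ℝ) : ℝ :=
  sInf ((fun u : ℝ → H => supNorm u τ T) ''
    {u : ℝ → H | MemLinfty u 0 T ∧ stateT U B T τ u y₀ = z_d})

/-- The admissible set `W_{τ,r}` of the optimal norm problem `(NP)^{τ,r}`. -/
def WadmSet (U : ℝ → H →L[ℂ] H) (B : H →L[ℂ] H) (y₀ z_d : H) (T τ r : ℝ) :
    Set (ℝ → H) :=
  {u | MemLinfty u 0 T ∧ ‖stateT U B T τ u y₀ - z_d‖ ≤ r}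

/-- The optimal norm `M(τ,r)` of `(NP)^{τ,r}`. -/
def MNP (U : ℝ → H →L[ℂ] H) (B : H →L[ℂ] H) (y₀ z_d : H) (T τ r : ℝ) : ℝ :=
  sInf ((fun u : ℝ → H => supNorm u τ T) '' WadmSet U B y₀ z_d T τ r)

/-- `u` is an optimal control to `(NP)^{τ,r}`. -/
def IsOptNP (U : ℝ → H →L[ℂ] H) (B : H →L[ℂ] H) (y₀ z_d : H) (T τ r : ℝ) (u : ℝ → H) :
    Prop :=
  u ∈ WadmSet U B y₀ z_d T τ r ∧ supNorm u τ T = MNP U B y₀ z_d T τ r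

/-- The admissible set `V_{M,r}` of the second type optimal time problem `(TP)^{M,r}`. -/
def VadmSet (U : ℝ → H →L[ℂ] H) (B : H →L[ℂ] H) (y₀ z_d : H) (T M r : ℝ) :
    Set (ℝ → H) :=
  {u | ∃ τ : ℝ, τ ∈ Ico (0 : ℝ) T ∧ u ∈ UadmSet M τ T ∧
    ‖stateT U B T τ u y₀ - z_d‖ ≤ r}

/-- `τ_{M,r}(u)`. -/
def tauOf (U : ℝ → H →L[ℂ] H) (B : H →L[ℂ] H) (y₀ z_d : H) (T r : ℝ) (u : ℝ → H) : ℝ :=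
  sSup {τ : ℝ | τ ∈ Ico (0 : ℝ) T ∧ ‖stateT U B T τ u y₀ - z_d‖ ≤ r}

/-- The optimal time `τ(M,r)` of `(TP)^{M,r}`. -/
def tauTP (U : ℝ → H →L[ℂ] H) (B : H →L[ℂ] H) (y₀ z_d : H) (T M r : ℝ) : ℝ :=
  sSup (tauOf U B y₀ z_d T r '' VadmSet U B y₀ z_d T M r)

/-- `u` is an optimal control to `(TP)^{M,r}`. -/
def IsOptTP (U : ℝ → H →L[ℂ] H) (B : H →L[ℂ] H) (y₀ z_d : H) (T M r : ℝ) (u : ℝ → H) :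
    Prop :=
  u ∈ VadmSet U B y₀ z_d T M r ∧
    ‖stateT U B T (tauTP U B y₀ z_d T M r) u y₀ - z_d‖ ≤ r

/-- The adjoint state `φ*(t) = U(t-T)(z_d - y(T; χ_{(τ,T)}u, y₀))`. -/
def adjState (U : ℝ → H →L[ℂ] H) (B : H →L[ℂ] H) (y₀ z_d : H) (T τ : ℝ) (u : ℝ → H)
    (t : ℝ) : H :=
  U (t - T) (z_d - stateT U B T τ u y₀)

section Helpers
set_option linter.unusedSectionVars false

variable {U : ℝ → H →L[ℂ] H} {B : H →L[ℂ] H}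

lemma IsUnitaryGroup.apply_apply (hU : IsUnitaryGroup U) (s t : ℝ) (x : H) :
    U s (U t x) = U (s + t) x := by rw [hU.2.1 s t]; rfl

lemma IsUnitaryGroup.zero_apply (hU : IsUnitaryGroup U) (x : H) : U 0 x = x := by
  rw [hU.1]; rfl

lemma IsUnitaryGroup.norm_apply (hU : IsUnitaryGroup U) (t : ℝ) (x : H) :
    ‖U t x‖ = ‖x‖ := hU.2.2.1 t x

lemma IsUnitaryGroup.cancel (hU : IsUnitaryGroup U) (t : ℝ) (x : H) :
    U t (U (-t) x) = x := by
  rw [hU.apply_apply, add_neg_cancel, hU.zero_apply]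

lemma IsUnitaryGroup.continuous_joint (hU : IsUnitaryGroup U) :
    Continuous fun p : ℝ × H => U p.1 p.2 := by
  rw [continuous_iff_continuousAt]
  rintro ⟨t₀, x₀⟩
  have hle : ∀ p : ℝ × H, dist (U p.1 p.2) (U t₀ x₀) ≤
      ‖p.2 - x₀‖ + dist (U p.1 x₀) (U t₀ x₀) := by
    intro p
    calc dist (U p.1 p.2) (U t₀ x₀) ≤ dist (U p.1 p.2) (U p.1 x₀) + dist (U p.1 x₀) (U t₀ x₀) :=
          dist_triangle _ _ _
      _ = ‖p.2 - x₀‖ + dist (U p.1 x₀) (U t₀ x₀) := by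
          rw [dist_eq_norm, ← map_sub, hU.norm_apply]
  have h0 : Filter.Tendsto (fun p : ℝ × H => ‖p.2 - x₀‖ + dist (U p.1 x₀) (U t₀ x₀))
      (nhds (t₀, x₀)) (nhds 0) := by
    have h1 : Filter.Tendsto (fun p : ℝ × H => ‖p.2 - x₀‖) (nhds (t₀, x₀)) (nhds 0) := by
      have hc : Continuous fun p : ℝ × H => ‖p.2 - x₀‖ := (continuous_snd.sub continuous_const).norm
      have := hc.continuousAt (x := (t₀, x₀))
      unfold ContinuousAt at this
      simpa using this
    have h2 : Filter.Tendsto (fun p : ℝ × H => dist (U p.1 x₀) (U t₀ x₀))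
        (nhds (t₀, x₀)) (nhds 0) := by
      have hc : Continuous fun p : ℝ × H => dist (U p.1 x₀) (U t₀ x₀) :=
        (((hU.2.2.2 x₀).comp continuous_fst).dist continuous_const)
      have := hc.continuousAt (x := (t₀, x₀))
      unfold ContinuousAt at this
      simpa using this
    simpa using h1.add h2
  have : Filter.Tendsto (fun p : ℝ × H => dist (U p.1 p.2) (U t₀ x₀)) (nhds (t₀, x₀)) (nhds 0) :=
    squeeze_zero (fun p => dist_nonneg) hle h0
  exact tendsto_iff_dist_tendsto_zero.2 this

lemma IsUnitaryGroup.inner_apply (hU : IsUnitaryGroup U) (t : ℝ) (x y : H) :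
    (inner ℂ (U t x) (U t y) : ℂ) = inner ℂ x y := by
  let f : H →ₗᵢ[ℂ] H := ⟨(U t).toLinearMap, fun x => hU.norm_apply t x⟩
  exact f.inner_map_map x y

lemma IsUnitaryGroup.inner_shift (hU : IsUnitaryGroup U) (t : ℝ) (η x : H) :
    (inner ℂ η (U t x) : ℂ) = inner ℂ (U (-t) η) x := by
  conv_rhs => rw [← hU.inner_apply t (U (-t) η) x, hU.cancel]

lemma aesm_integrand (hU : IsUnitaryGroup U) (B : H →L[ℂ] H) {v : ℝ → H}
    (hv : AEStronglyMeasurable v (volume : Measure ℝ)) (e : ℝ) :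
    AEStronglyMeasurable (fun s => U (e - s) (B (v s))) (volume : Measure ℝ) := by
  have h1 : AEStronglyMeasurable (fun s : ℝ => ((e - s : ℝ), B (v s))) (volume : Measure ℝ) :=
    (Continuous.aestronglyMeasurable (by fun_prop)).prodMk
      (B.continuous.comp_aestronglyMeasurable hv)
  exact hU.continuous_joint.comp_aestronglyMeasurable h1

lemma integrableOn_integrand (hU : IsUnitaryGroup U) (B : H →L[ℂ] H) {v : ℝ → H} {a b e K : ℝ}
    (hv : AEStronglyMeasurable v (volume : Measure ℝ))
    (hb : ∀ᵐ s : ℝ ∂volume, s ∈ Ioo a b → ‖v s‖ ≤ K) :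
    IntegrableOn (fun s => U (e - s) (B (v s))) (Ioo a b) volume := by
  refine Integrable.mono' (g := fun _ => ‖B‖ * K) ?_ ((aesm_integrand hU B hv e).restrict) ?_
  · exact integrableOn_const measure_Ioo_lt_top.ne
  · rw [ae_restrict_iff' measurableSet_Ioo]
    filter_upwards [hb] with s hs hmem
    rw [hU.norm_apply]
    exact (B.le_opNorm _).trans
      (mul_le_mul_of_nonneg_left (hs hmem) (norm_nonneg (B : H →L[ℂ] H)))

end Helpers
section Helpers2
set_option linter.unusedSectionVars false

variable {U : ℝ → H →L[ℂ] H} {B : H →L[ℂ] H}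

lemma supNorm_nonneg (u : ℝ → H) (a b : ℝ) : 0 ≤ supNorm u a b :=
  Real.sInf_nonneg fun _ hc => hc.1

lemma supNorm_le {u : ℝ → H} {a b c : ℝ} (hc : 0 ≤ c)
    (h : ∀ᵐ t : ℝ ∂volume, t ∈ Ioo a b → ‖u t‖ ≤ c) : supNorm u a b ≤ c :=
  csInf_le ⟨0, fun _ hx => hx.1⟩ ⟨hc, h⟩

lemma ae_le_supNorm {u : ℝ → H} {a b : ℝ}
    (hne : ∃ c : ℝ, ∀ᵐ t : ℝ ∂volume, t ∈ Ioo a b → ‖u t‖ ≤ c) :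
    ∀ᵐ t : ℝ ∂volume, t ∈ Ioo a b → ‖u t‖ ≤ supNorm u a b := by
  set S := {c : ℝ | 0 ≤ c ∧ ∀ᵐ t : ℝ ∂volume, t ∈ Ioo a b → ‖u t‖ ≤ c} with hSdef
  have hS : S.Nonempty := by
    obtain ⟨c, hc⟩ := hne
    exact ⟨max c 0, le_max_right _ _, hc.mono fun t ht hm => (ht hm).trans (le_max_left _ _)⟩
  have key : ∀ n : ℕ, ∃ c ∈ S, c < sInf S + 1 / (n + 1) :=
    fun n => exists_lt_of_csInf_lt hS (lt_add_of_pos_right _ (by positivity))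
  choose c hcS hclt using key
  have hae : ∀ᵐ t : ℝ ∂volume, ∀ n : ℕ, t ∈ Ioo a b → ‖u t‖ ≤ c n :=
    MeasureTheory.ae_all_iff.2 fun n => (hcS n).2
  refine hae.mono fun t ht hmem => ?_
  have : ∀ n : ℕ, ‖u t‖ ≤ sInf S + 1 / (n + 1) := fun n => (ht n hmem).trans (hclt n).le
  have hle : ‖u t‖ ≤ sInf S := by
    by_contra hlt
    push_neg at hlt
    obtain ⟨n, hn⟩ := exists_nat_one_div_lt (sub_pos.2 hlt)
    have := this n
    have : (1 : ℝ) / (n + 1) < 1 / (n + 1) := by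
      calc (1:ℝ)/(n+1) ≥ ‖u t‖ - sInf S := by linarith [this]
        _ > 1/(n+1) := hn
    linarith
  exact hle

lemma supNorm_mono_left {u : ℝ → H} {a a' b : ℝ} (h : a ≤ a')
    (hne : ∃ c : ℝ, ∀ᵐ t : ℝ ∂volume, t ∈ Ioo a b → ‖u t‖ ≤ c) :
    supNorm u a' b ≤ supNorm u a b := by
  refine supNorm_le (supNorm_nonneg u a b) ?_
  exact (ae_le_supNorm hne).mono fun t ht hm => ht ⟨h.trans_lt hm.1, hm.2⟩

/-- `stateT` only depends on the control's values on `(τ, T)`. -/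
lemma stateT_congr_ae {u v : ℝ → H} {T' τ : ℝ} {y₀ : H}
    (h : ∀ᵐ s : ℝ ∂volume, s ∈ Ioo τ T' → u s = v s) :
    stateT U B T' τ u y₀ = stateT U B T' τ v y₀ := by
  unfold stateT
  congr 1
  exact MeasureTheory.setIntegral_congr_ae measurableSet_Ioo (h.mono fun s hs hm => by rw [hs hm])

lemma stateT_split (hU : IsUnitaryGroup U) {u : ℝ → H} {T' τ₁ τ₂ K : ℝ} {y₀ : H}
    (hu : AEStronglyMeasurable u (volume : Measure ℝ))
    (hb : ∀ᵐ s : ℝ ∂volume, s ∈ Ioo τ₁ T' → ‖u s‖ ≤ K)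
    (h1 : τ₁ ≤ τ₂) (h2 : τ₂ < T') :
    stateT U B T' τ₁ u y₀ =
      stateT U B T' τ₂ u y₀ + ∫ s in Ioo τ₁ τ₂, U (T' - s) (B (u s)) := by
  have hint : IntegrableOn (fun s => U (T' - s) (B (u s))) (Ioo τ₁ T') volume :=
    integrableOn_integrand hU B hu hb
  have hset : Ioc τ₁ τ₂ ∪ Ioo τ₂ T' = Ioo τ₁ T' := Ioc_union_Ioo_eq_Ioo h1 h2
  have hsub1 : Ioc τ₁ τ₂ ⊆ Ioo τ₁ T' := by rw [← hset]; exact subset_union_left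
  have hsub2 : Ioo τ₂ T' ⊆ Ioo τ₁ T' := by rw [← hset]; exact subset_union_right
  have hdisj : Disjoint (Ioc τ₁ τ₂) (Ioo τ₂ T') := by
    rw [Set.disjoint_left]
    rintro x ⟨_, hx2⟩ ⟨hx3, _⟩
    exact absurd hx3 (not_lt.2 hx2)
  have := MeasureTheory.setIntegral_union (f := fun s => U (T' - s) (B (u s))) (μ := volume)
    hdisj measurableSet_Ioo (hint.mono_set hsub1) (hint.mono_set hsub2)
  rw [hset] at this
  unfold stateT
  rw [this, MeasureTheory.setIntegral_congr_set (Ioo_ae_eq_Ioc (a := τ₁) (b := τ₂)).symm]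
  abel

end Helpers2
section Helpers3
set_option linter.unusedSectionVars false

variable {U : ℝ → H →L[ℂ] H} {B : H →L[ℂ] H}

lemma norm_setIntegral_integrand_le (hU : IsUnitaryGroup U) {u : ℝ → H} {a b e K : ℝ}
    (hb : ∀ᵐ s : ℝ ∂volume, s ∈ Ioo a b → ‖u s‖ ≤ K) (hab : a ≤ b) :
    ‖∫ s in Ioo a b, U (e - s) (B (u s))‖ ≤ ‖B‖ * K * (b - a) := by
  have h := MeasureTheory.norm_setIntegral_le_of_norm_le_const_ae'
    (f := fun s => U (e - s) (B (u s))) (s := Ioo a b) (μ := volume) (C := ‖B‖ * K)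
    measure_Ioo_lt_top ?_
  · rwa [Real.volume_real_Ioo_of_le hab] at h
  · filter_upwards [hb] with s hs hmem
    rw [hU.norm_apply]
    exact (B.le_opNorm _).trans (mul_le_mul_of_nonneg_left (hs hmem) (norm_nonneg _))

/-- The error of a control can only deteriorate slowly when postponing the start time. -/
lemma error_shift (hU : IsUnitaryGroup U) {u : ℝ → H} {T' t₀ t' K : ℝ} {y₀ : H}
    (hu : AEStronglyMeasurable u (volume : Measure ℝ))
    (hb : ∀ᵐ s : ℝ ∂volume, s ∈ Ioo t₀ T' → ‖u s‖ ≤ K)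
    (h1 : t₀ ≤ t') (h2 : t' < T') :
    ‖stateT U B T' t' u y₀ - stateT U B T' t₀ u y₀‖ ≤ ‖B‖ * K * (t' - t₀) := by
  have := stateT_split (B := B) (y₀ := y₀) hU hu hb h1 h2
  rw [this]
  have : stateT U B T' t' u y₀ - (stateT U B T' t' u y₀ + ∫ s in Ioo t₀ t', U (T' - s) (B (u s)))
      = -∫ s in Ioo t₀ t', U (T' - s) (B (u s)) := by abel
  rw [this, norm_neg]
  exact norm_setIntegral_integrand_le hU
    (hb.mono fun s hs hm => hs ⟨hm.1, hm.2.trans h2⟩) h1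

/-- Positive lower bound for admissible norms: any control reaching the ball
`B(z_d, r)` from time `a` must have `L∞` norm at least `(r_T - r)/(‖B‖(T-a))`. -/
lemma supNorm_lower_bound (hU : IsUnitaryGroup U) {u : ℝ → H} {T' a r : ℝ} {y₀ z_d : H}
    (hu : AEStronglyMeasurable u (volume : Measure ℝ))
    (hbd : ∃ c : ℝ, ∀ᵐ t : ℝ ∂volume, t ∈ Ioo a T' → ‖u t‖ ≤ c)
    (ha : a < T') (herr : ‖stateT U B T' a u y₀ - z_d‖ ≤ r) :
    (‖U T' y₀ - z_d‖ - r) / (‖B‖ * (T' - a)) ≤ supNorm u a T' := by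
  have hBpos : (0:ℝ) ≤ ‖B‖ := norm_nonneg _
  have hN := ae_le_supNorm hbd
  have hNnn := supNorm_nonneg u a T'
  have hIle : ‖∫ s in Ioo a T', U (T' - s) (B (u s))‖ ≤ ‖B‖ * supNorm u a T' * (T' - a) :=
    norm_setIntegral_integrand_le hU hN ha.le
  have hrT : ‖U T' y₀ - z_d‖ ≤ r + ‖B‖ * supNorm u a T' * (T' - a) := by
    have : U T' y₀ - z_d = (stateT U B T' a u y₀ - z_d) -
        (∫ s in Ioo a T', U (T' - s) (B (u s))) := by
      unfold stateT; abel
    rw [this]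
    exact (norm_sub_le _ _).trans (add_le_add herr hIle)
  rcases le_or_gt ‖B‖ 0 with hB0 | hB0
  · have hBz : ‖B‖ = 0 := le_antisymm hB0 hBpos
    rw [hBz]
    simp only [zero_mul]
    rw [div_zero]
    exact hNnn
  · have hpos : 0 < ‖B‖ * (T' - a) := mul_pos hB0 (by linarith)
    rw [div_le_iff₀ hpos]
    nlinarith [hrT]

end Helpers3
section Helpers4
set_option linter.unusedSectionVars false

variable {U : ℝ → H →L[ℂ] H} {B : H →L[ℂ] H}

/-- Translated form of exact controllability: a control supported in `(a,b)` can create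
any state correction `ξ` at time `T'`, with cost proportional to `‖ξ‖`. -/
lemma EC_steer (hU : IsUnitaryGroup U) (hEC : EC U B) {T' a b : ℝ} (hab : a < b) (hbT : b ≤ T') :
    ∃ C : ℝ, 0 < C ∧ ∀ ξ : H, ∃ c : ℝ → H,
      AEStronglyMeasurable c (volume : Measure ℝ) ∧
      (∀ s, s ∉ Ioo a b → c s = 0) ∧
      (∀ᵐ s : ℝ ∂volume, s ∈ Ioo a b → ‖c s‖ ≤ C * ‖ξ‖) ∧
      (∫ s in Ioo a b, U (T' - s) (B (c s))) = ξ := by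
  set δ := b - a with hδdef
  have hδ : 0 < δ := by simp [hδdef]; linarith
  obtain ⟨C, hC, hP⟩ := hEC δ hδ
  refine ⟨C, hC, fun ξ => ?_⟩
  obtain ⟨u, hum, hub, hust⟩ := hP 0 (U (b - T') ξ)
  set z := U (b - T') ξ with hzdef
  have hznorm : ‖z‖ = ‖ξ‖ := hU.norm_apply _ _
  have hbound : ∀ᵐ t : ℝ ∂volume, t ∈ Ioo 0 δ → ‖u t‖ ≤ C * ‖ξ‖ := by
    filter_upwards [hub] with t ht hmem
    have := ht hmem
    rwa [map_zero, sub_zero, hznorm] at this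
  have hmp : MeasurePreserving (fun x : ℝ => x - a) volume volume :=
    measurePreserving_sub_right volume a
  have hmem_iff : ∀ s : ℝ, s ∈ Ioo a b ↔ s - a ∈ Ioo 0 δ := by
    intro s
    simp only [mem_Ioo, hδdef]
    constructor <;> intro h <;> constructor <;> linarith [h.1, h.2]
  set c : ℝ → H := (Ioo a b).indicator (fun s => u (s - a)) with hcdef
  have hcm : AEStronglyMeasurable c (volume : Measure ℝ) := by
    have : AEStronglyMeasurable ((fun σ => u σ) ∘ (fun s : ℝ => s - a)) (volume : Measure ℝ) :=
      hum.comp_quasiMeasurePreserving hmp.quasiMeasurePreserving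
    exact this.indicator measurableSet_Ioo
  refine ⟨c, hcm, fun s hs => indicator_of_notMem hs _, ?_, ?_⟩
  · have := hmp.quasiMeasurePreserving.ae hbound
    filter_upwards [this] with s hs hmem
    rw [hcdef, indicator_of_mem hmem]
    exact hs ((hmem_iff s).1 hmem)
  · have hstep1 : (∫ s in Ioo a b, U (T' - s) (B (c s))) =
        ∫ s in Ioo a b, U (T' - s) (B (u (s - a))) :=
      MeasureTheory.setIntegral_congr_fun measurableSet_Ioo
        (fun s hs => by rw [hcdef, indicator_of_mem hs])
    set F : ℝ → H := (Ioo 0 δ).indicator (fun σ => U (T' - a - σ) (B (u σ))) with hFdef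
    have hstep3 : (fun s : ℝ => F (s - a)) =
        (Ioo a b).indicator (fun s => U (T' - s) (B (u (s - a)))) := by
      funext s
      by_cases hs : s ∈ Ioo a b
      · rw [indicator_of_mem hs, hFdef, indicator_of_mem ((hmem_iff s).1 hs)]
        congr 1
        ring
      · rw [indicator_of_notMem hs, hFdef,
          indicator_of_notMem (fun hm => hs ((hmem_iff s).2 hm))]
    have hstep4 : (∫ s : ℝ, F (s - a)) = ∫ σ : ℝ, F σ :=
      hmp.integral_comp (Homeomorph.subRight a).toMeasurableEquiv.measurableEmbedding F
    have hstep2 : (∫ s in Ioo a b, U (T' - s) (B (u (s - a)))) = ∫ σ in Ioo 0 δ, U (T' - a - σ) (B (u σ)) := by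
      rw [← MeasureTheory.integral_indicator (measurableSet_Ioo (a := a) (b := b)),
        ← hstep3, hstep4, hFdef, MeasureTheory.integral_indicator measurableSet_Ioo]
    have hint : IntegrableOn (fun σ => U (δ - σ) (B (u σ))) (Ioo 0 δ) volume :=
      integrableOn_integrand hU B hum hbound
    have hstep6 : (∫ σ in Ioo 0 δ, U (T' - a - σ) (B (u σ))) =
        ∫ σ in Ioo 0 δ, U (T' - b) (U (δ - σ) (B (u σ))) := by
      refine MeasureTheory.setIntegral_congr_fun measurableSet_Ioo (fun σ _ => ?_)
      rw [hU.apply_apply]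
      congr 1
      simp [hδdef]
      ring
    have hstep7 : (∫ σ in Ioo 0 δ, U (T' - b) (U (δ - σ) (B (u σ)))) =
        U (T' - b) (∫ σ in Ioo 0 δ, U (δ - σ) (B (u σ))) :=
      ContinuousLinearMap.integral_comp_comm _ hint
    have hstep8 : (∫ σ in Ioo 0 δ, U (δ - σ) (B (u σ))) = z := by
      have := hust
      unfold stateT at this
      rwa [map_zero, zero_add] at this
    have hstep9 : U (T' - b) z = ξ := by
      rw [hzdef]
      have : b - T' = -(T' - b) := by ring
      rw [this, hU.cancel]
    rw [hstep1, hstep2, hstep6, hstep7, hstep8, hstep9]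

end Helpers4
section Helpers5
set_option linter.unusedSectionVars false

variable {U : ℝ → H →L[ℂ] H} {B : H →L[ℂ] H}

lemma stateT_combine (hU : IsUnitaryGroup U) {v c : ℝ → H} {T' a b m l N K : ℝ} {y₀ : H}
    (hv : AEStronglyMeasurable v (volume : Measure ℝ))
    (hc : AEStronglyMeasurable c (volume : Measure ℝ))
    (hvb : ∀ᵐ s : ℝ ∂volume, s ∈ Ioo b T' → ‖v s‖ ≤ N)
    (hcb : ∀ᵐ s : ℝ ∂volume, s ∈ Ioo a m → ‖c s‖ ≤ K)
    (hc0 : ∀ s, s ∉ Ioo a m → c s = 0)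
    (hab : a ≤ b) (hbT : b ≤ T') (ham : a ≤ m) (hmT : m ≤ T') :
    stateT U B T' a (fun s => (Ioo b T').indicator (fun s => l • v s) s + c s) y₀
      = U T' y₀ + l • (∫ s in Ioo b T', U (T' - s) (B (v s)))
        + ∫ s in Ioo a m, U (T' - s) (B (c s)) := by
  have hsub1 : Ioo b T' ⊆ Ioo a T' := Ioo_subset_Ioo hab le_rfl
  have hsub2 : Ioo a m ⊆ Ioo a T' := Ioo_subset_Ioo le_rfl hmT
  -- pointwise identities
  have hpt : ∀ s : ℝ, U (T' - s) (B ((Ioo b T').indicator (fun s => l • v s) s + c s)) =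
      (Ioo b T').indicator (fun s => l • (U (T' - s) (B (v s)))) s
        + (Ioo a m).indicator (fun s => U (T' - s) (B (c s))) s := by
    intro s
    rw [map_add, map_add]
    congr 1
    · by_cases hs : s ∈ Ioo b T'
      · rw [indicator_of_mem hs, indicator_of_mem hs, B.map_smul_of_tower,
          (U (T' - s)).map_smul_of_tower]
      · rw [indicator_of_notMem hs, indicator_of_notMem hs, map_zero, map_zero]
    · by_cases hs : s ∈ Ioo a m
      · rw [indicator_of_mem hs]
      · rw [indicator_of_notMem hs, hc0 s hs, map_zero, map_zero]
  -- integrability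
  have hint1 : IntegrableOn
      (fun s => (Ioo b T').indicator (fun s => l • (U (T' - s) (B (v s)))) s) (Ioo a T') volume := by
    have : IntegrableOn (fun s => l • (U (T' - s) (B (v s)))) (Ioo b T') volume :=
      (integrableOn_integrand hU B hv hvb).smul l
    exact ((integrable_indicator_iff measurableSet_Ioo).2 this).integrableOn
  have hint2 : IntegrableOn
      (fun s => (Ioo a m).indicator (fun s => U (T' - s) (B (c s))) s) (Ioo a T') volume :=
    ((integrable_indicator_iff measurableSet_Ioo).2 (integrableOn_integrand hU B hc hcb)).integrableOn
  unfold stateT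
  rw [MeasureTheory.setIntegral_congr_fun (measurableSet_Ioo (a := a) (b := T'))
      (fun s _ => hpt s),
    MeasureTheory.integral_add hint1 hint2]
  have e1 : (∫ s in Ioo a T', (Ioo b T').indicator (fun s => l • (U (T' - s) (B (v s)))) s)
      = l • ∫ s in Ioo b T', U (T' - s) (B (v s)) := by
    rw [MeasureTheory.setIntegral_indicator measurableSet_Ioo,
      Set.inter_eq_right.2 hsub1, MeasureTheory.integral_smul]
  have e2 : (∫ s in Ioo a T', (Ioo a m).indicator (fun s => U (T' - s) (B (c s))) s)
      = ∫ s in Ioo a m, U (T' - s) (B (c s)) := by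
    rw [MeasureTheory.setIntegral_indicator measurableSet_Ioo, Set.inter_eq_right.2 hsub2]
  rw [e1, e2]
  abel

end Helpers5
section Helpers6
set_option linter.unusedSectionVars false

variable {U : ℝ → H →L[ℂ] H} {B : H →L[ℂ] H}

/-- Key strict monotonicity step: if the target ball is reachable from time `b` with controls of
norm `≤ M`, then the optimal norm from any earlier time `a < b` is strictly smaller than `M`. -/
lemma MNP_lt_of_reachable (hU : IsUnitaryGroup U) (hEC : EC U B)
    {T' a b r M : ℝ} {y₀ z_d : H} {v : ℝ → H}
    (ha : 0 ≤ a) (hab : a < b) (hbT : b < T')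
    (hM : 0 < M) (hr : 0 < r) (hrT : r < ‖U T' y₀ - z_d‖)
    (hv : AEStronglyMeasurable v (volume : Measure ℝ))
    (hvb : ∀ᵐ s : ℝ ∂volume, s ∈ Ioo b T' → ‖v s‖ ≤ M)
    (herr : ‖stateT U B T' b v y₀ - z_d‖ ≤ r) :
    MNP U B y₀ z_d T' a r < M := by
  obtain ⟨C, hC, hsteer⟩ := EC_steer (B := B) hU hEC hab hbT.le
  set rT := ‖U T' y₀ - z_d‖ with hrTdef
  have hrT0 : 0 < rT := hr.trans hrT
  set l : ℝ := max (1/2) (1 - M / (2 * C * rT)) with hldef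
  have hl0 : 0 < l := lt_of_lt_of_le (by norm_num) (le_max_left _ _)
  have hl1 : l < 1 := by
    apply max_lt (by norm_num)
    have : 0 < M / (2 * C * rT) := by positivity
    linarith
  have hlC : C * (1 - l) * rT ≤ M / 2 := by
    have h1 : 1 - l ≤ M / (2 * C * rT) := by
      have := le_max_right (1/2 : ℝ) (1 - M / (2 * C * rT))
      rw [← hldef] at this
      linarith
    calc C * (1 - l) * rT ≤ C * (M / (2 * C * rT)) * rT := by
          apply mul_le_mul_of_nonneg_right _ hrT0.le
          exact mul_le_mul_of_nonneg_left h1 hC.le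
      _ = M / 2 := by field_simp
  set ξ : H := (1 - l) • (z_d - U T' y₀) with hξdef
  have hξnorm : ‖ξ‖ = (1 - l) * rT := by
    rw [hξdef, norm_smul, Real.norm_eq_abs, abs_of_nonneg (by linarith), norm_sub_rev]
  obtain ⟨c, hcm, hc0, hcb, hcint⟩ := hsteer ξ
  have hcb' : ∀ᵐ s : ℝ ∂volume, s ∈ Ioo a b → ‖c s‖ ≤ M / 2 := by
    filter_upwards [hcb] with s hs hmem
    exact (hs hmem).trans (by rw [hξnorm]; nlinarith)
  set w : ℝ → H := fun s => (Ioo b T').indicator (fun s => l • v s) s + c s with hwdef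
  have hwm : AEStronglyMeasurable w (volume : Measure ℝ) :=
    ((hv.const_smul l).indicator measurableSet_Ioo).add hcm
  have hstate : stateT U B T' a w y₀ = U T' y₀
      + l • (∫ s in Ioo b T', U (T' - s) (B (v s))) + ξ := by
    rw [hwdef, stateT_combine hU hv hcm hvb hcb' hc0 hab.le hbT.le hab.le hbT.le, hcint]
  have hstate_v : (∫ s in Ioo b T', U (T' - s) (B (v s))) = stateT U B T' b v y₀ - U T' y₀ := by
    unfold stateT; abel
  have herr_w : ‖stateT U B T' a w y₀ - z_d‖ ≤ r := by
    have heq : stateT U B T' a w y₀ - z_d = l • (stateT U B T' b v y₀ - z_d) := by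
      rw [hstate, hstate_v, hξdef]
      module
    rw [heq, norm_smul, Real.norm_eq_abs, abs_of_nonneg hl0.le]
    calc l * ‖stateT U B T' b v y₀ - z_d‖ ≤ 1 * r :=
          mul_le_mul hl1.le herr (norm_nonneg _) (by norm_num)
      _ = r := one_mul r
  -- norm bound for w, valid globally
  have hwb : ∀ᵐ s : ℝ ∂volume, ‖w s‖ ≤ max (l * M) (M / 2) := by
    filter_upwards [hvb, hcb'] with s hsv hsc
    have hM2 : (0:ℝ) ≤ max (l * M) (M / 2) := le_max_of_le_right (by linarith)
    by_cases hs : s ∈ Ioo b T'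
    · have hcs : c s = 0 := hc0 s (fun hm => absurd hm.2 (not_lt.2 hs.1.le))
      simp only [hwdef, indicator_of_mem hs, hcs, add_zero, norm_smul, Real.norm_eq_abs,
        abs_of_nonneg hl0.le]
      exact le_max_of_le_left (mul_le_mul_of_nonneg_left (hsv hs) hl0.le)
    · simp only [hwdef, indicator_of_notMem hs, zero_add]
      by_cases hs2 : s ∈ Ioo a b
      · exact le_max_of_le_right (hsc hs2)
      · rw [hc0 s hs2, norm_zero]; exact hM2
  have hmax_lt : max (l * M) (M / 2) < M := max_lt (by nlinarith) (by linarith)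
  have hw_mem : w ∈ WadmSet U B y₀ z_d T' a r :=
    ⟨⟨hwm, max (l * M) (M / 2), hwb.mono fun s hs _ => hs⟩, herr_w⟩
  have hsup : supNorm w a T' ≤ max (l * M) (M / 2) :=
    supNorm_le (le_max_of_le_right (by linarith)) (hwb.mono fun s hs _ => hs)
  have hMNP : MNP U B y₀ z_d T' a r ≤ supNorm w a T' := by
    apply csInf_le
    · exact ⟨0, fun x hx => by
        obtain ⟨w', _, rfl⟩ := hx
        exact supNorm_nonneg w' a T'⟩
    · exact ⟨w, hw_mem, rfl⟩
  exact lt_of_le_of_lt (hMNP.trans hsup) hmax_lt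

end Helpers6
section Helpers7
set_option linter.unusedSectionVars false

variable {U : ℝ → H →L[ℂ] H} {B : H →L[ℂ] H}

/-- Key maximality step: if the ball is reachable at time `t*` with strictly sub-maximal
norm `N < M`, then it is reachable from a strictly later time with norm `≤ M`. -/
lemma exists_later_reach (hU : IsUnitaryGroup U) (hEC : EC U B)
    {T' t₀ r M N : ℝ} {y₀ z_d : H} {v : ℝ → H}
    (ht0 : 0 ≤ t₀) (htT : t₀ < T')
    (hM : 0 < M) (hr : 0 < r) (hrT : r < ‖U T' y₀ - z_d‖)
    (hN0 : 0 ≤ N) (hNM : N < M)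
    (hv : AEStronglyMeasurable v (volume : Measure ℝ))
    (hvb : ∀ᵐ s : ℝ ∂volume, s ∈ Ioo t₀ T' → ‖v s‖ ≤ N)
    (herr : ‖stateT U B T' t₀ v y₀ - z_d‖ ≤ r) :
    ∃ w t', t' ∈ Ioo t₀ T' ∧ w ∈ VadmSet U B y₀ z_d T' M r ∧
      ‖stateT U B T' t' w y₀ - z_d‖ ≤ r := by
  set m : ℝ := (t₀ + T') / 2 with hmdef
  have htm : t₀ < m := by rw [hmdef]; linarith
  have hmT : m ≤ T' := by rw [hmdef]; linarith
  obtain ⟨C, hC, hsteer⟩ := EC_steer (B := B) hU hEC htm hmT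
  set rT := ‖U T' y₀ - z_d‖ with hrTdef
  have hrT0 : 0 < rT := hr.trans hrT
  set l : ℝ := max (1/2) (1 - (M - N) / (2 * C * rT)) with hldef
  have hl0 : 0 < l := lt_of_lt_of_le (by norm_num) (le_max_left _ _)
  have hl1 : l < 1 := by
    apply max_lt (by norm_num)
    have : 0 < (M - N) / (2 * C * rT) := by
      apply div_pos (by linarith) (by positivity)
    linarith
  have hlC : C * (1 - l) * rT ≤ (M - N) / 2 := by
    have h1 : 1 - l ≤ (M - N) / (2 * C * rT) := by
      have := le_max_right (1/2 : ℝ) (1 - (M - N) / (2 * C * rT))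
      rw [← hldef] at this
      linarith
    calc C * (1 - l) * rT ≤ C * ((M - N) / (2 * C * rT)) * rT := by
          apply mul_le_mul_of_nonneg_right _ hrT0.le
          exact mul_le_mul_of_nonneg_left h1 hC.le
      _ = (M - N) / 2 := by field_simp
  set ξ : H := (1 - l) • (z_d - U T' y₀) with hξdef
  have hξnorm : ‖ξ‖ = (1 - l) * rT := by
    rw [hξdef, norm_smul, Real.norm_eq_abs, abs_of_nonneg (by linarith), norm_sub_rev]
  obtain ⟨c, hcm, hc0, hcb, hcint⟩ := hsteer ξ
  have hcb' : ∀ᵐ s : ℝ ∂volume, s ∈ Ioo t₀ m → ‖c s‖ ≤ (M - N) / 2 := by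
    filter_upwards [hcb] with s hs hmem
    exact (hs hmem).trans (by rw [hξnorm]; nlinarith)
  set w : ℝ → H := fun s => (Ioo t₀ T').indicator (fun s => l • v s) s + c s with hwdef
  have hwm : AEStronglyMeasurable w (volume : Measure ℝ) :=
    ((hv.const_smul l).indicator measurableSet_Ioo).add hcm
  have hstate : stateT U B T' t₀ w y₀ = U T' y₀
      + l • (∫ s in Ioo t₀ T', U (T' - s) (B (v s))) + ξ := by
    rw [hwdef, stateT_combine hU hv hcm hvb hcb' hc0 le_rfl htT.le htm.le hmT, hcint]
  have hstate_v : (∫ s in Ioo t₀ T', U (T' - s) (B (v s))) = stateT U B T' t₀ v y₀ - U T' y₀ := by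
    unfold stateT; abel
  have herr_w : ‖stateT U B T' t₀ w y₀ - z_d‖ ≤ l * r := by
    have heq : stateT U B T' t₀ w y₀ - z_d = l • (stateT U B T' t₀ v y₀ - z_d) := by
      rw [hstate, hstate_v, hξdef]
      module
    rw [heq, norm_smul, Real.norm_eq_abs, abs_of_nonneg hl0.le]
    exact mul_le_mul_of_nonneg_left herr hl0.le
  set K : ℝ := l * N + (M - N) / 2 with hKdef
  have hK0 : 0 ≤ K := by
    have : 0 ≤ l * N := mul_nonneg hl0.le hN0
    rw [hKdef]; linarith
  have hKM : K < M := by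
    have : l * N ≤ N := by nlinarith
    rw [hKdef]; linarith
  -- global norm bound for w
  have hwb : ∀ᵐ s : ℝ ∂volume, ‖w s‖ ≤ K := by
    filter_upwards [hvb, hcb'] with s hsv hsc
    by_cases hs : s ∈ Ioo t₀ T'
    · have hvn : ‖(Ioo t₀ T').indicator (fun s => l • v s) s‖ ≤ l * N := by
        rw [indicator_of_mem hs, norm_smul, Real.norm_eq_abs, abs_of_nonneg hl0.le]
        exact mul_le_mul_of_nonneg_left (hsv hs) hl0.le
      by_cases hs2 : s ∈ Ioo t₀ m
      · calc ‖w s‖ ≤ ‖(Ioo t₀ T').indicator (fun s => l • v s) s‖ + ‖c s‖ := norm_add_le _ _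
          _ ≤ l * N + (M - N) / 2 := add_le_add hvn (hsc hs2)
      · have : c s = 0 := hc0 s hs2
        calc ‖w s‖ ≤ ‖(Ioo t₀ T').indicator (fun s => l • v s) s‖ + ‖c s‖ := norm_add_le _ _
          _ ≤ l * N + (M - N) / 2 := by
              rw [this, norm_zero]
              exact add_le_add hvn (by linarith)
    · have hc0' : c s = 0 := hc0 s (fun hm => hs ⟨hm.1, hm.2.trans_le hmT⟩)
      simp only [hwdef, indicator_of_notMem hs, hc0', add_zero, norm_zero]
      exact hK0
  -- choice of the later start time
  set t' : ℝ := min ((t₀ + T') / 2) (t₀ + (1 - l) * r / (‖B‖ * K + 1)) with ht'def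
  have hBK : 0 < ‖B‖ * K + 1 := by positivity
  have ht'1 : t₀ < t' := by
    apply lt_min (by rw [hmdef] at htm; exact htm)
    have : 0 < (1 - l) * r / (‖B‖ * K + 1) := by
      apply div_pos (by nlinarith) hBK
    linarith
  have ht'2 : t' < T' := lt_of_le_of_lt (min_le_left _ _) (by linarith)
  have hshift : ‖stateT U B T' t' w y₀ - stateT U B T' t₀ w y₀‖ ≤ ‖B‖ * K * (t' - t₀) :=
    error_shift hU hwm (hwb.mono fun s hs _ => hs) ht'1.le ht'2
  have herr_t' : ‖stateT U B T' t' w y₀ - z_d‖ ≤ r := by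
    have h1 : ‖stateT U B T' t' w y₀ - z_d‖ ≤
        ‖stateT U B T' t' w y₀ - stateT U B T' t₀ w y₀‖ + ‖stateT U B T' t₀ w y₀ - z_d‖ := by
      have : stateT U B T' t' w y₀ - z_d = (stateT U B T' t' w y₀ - stateT U B T' t₀ w y₀)
          + (stateT U B T' t₀ w y₀ - z_d) := by abel
      rw [this]; exact norm_add_le _ _
    have h2 : ‖B‖ * K * (t' - t₀) ≤ (1 - l) * r := by
      have ht'le : t' - t₀ ≤ (1 - l) * r / (‖B‖ * K + 1) := by
        have := min_le_right ((t₀ + T') / 2) (t₀ + (1 - l) * r / (‖B‖ * K + 1))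
        rw [← ht'def] at this
        linarith
      have hBKnn : 0 ≤ ‖B‖ * K := mul_nonneg (norm_nonneg _) hK0
      calc ‖B‖ * K * (t' - t₀) ≤ (‖B‖ * K + 1) * ((1 - l) * r / (‖B‖ * K + 1)) := by
            apply mul_le_mul (by linarith) ht'le (by linarith [ht'1]) (by linarith)
        _ = (1 - l) * r := by field_simp
    calc ‖stateT U B T' t' w y₀ - z_d‖ ≤ ‖B‖ * K * (t' - t₀) + l * r := by
          linarith [h1, hshift, herr_w]
      _ ≤ (1 - l) * r + l * r := by linarith
      _ = r := by ring
  refine ⟨w, t', ⟨ht'1, ht'2⟩, ⟨t', ⟨by linarith, ht'2⟩, ⟨⟨hwm, K, hwb.mono fun s hs _ => hs⟩,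
    hwb.mono fun s hs _ => hs.trans hKM.le⟩, herr_t'⟩, herr_t'⟩

end Helpers7
section Helpers8
set_option linter.unusedSectionVars false

variable {U : ℝ → H →L[ℂ] H} {B : H →L[ℂ] H}

/-- Shift lemma: a strict error margin allows postponing the start time. -/
lemma exists_later_of_strict (hU : IsUnitaryGroup U) {T' t₀ r K : ℝ} {y₀ z_d : H} {u : ℝ → H}
    (htT : t₀ < T') (hK0 : 0 ≤ K)
    (hum : AEStronglyMeasurable u (volume : Measure ℝ))
    (hub : ∀ᵐ s : ℝ ∂volume, s ∈ Ioo t₀ T' → ‖u s‖ ≤ K)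
    (herr : ‖stateT U B T' t₀ u y₀ - z_d‖ < r) :
    ∃ t', t' ∈ Ioo t₀ T' ∧ ‖stateT U B T' t' u y₀ - z_d‖ ≤ r := by
  set e := ‖stateT U B T' t₀ u y₀ - z_d‖ with hedef
  have hBK : 0 < ‖B‖ * K + 1 := by positivity
  set t' : ℝ := min ((t₀ + T') / 2) (t₀ + (r - e) / (‖B‖ * K + 1)) with ht'def
  have ht'1 : t₀ < t' := by
    apply lt_min (by linarith)
    have : 0 < (r - e) / (‖B‖ * K + 1) := div_pos (by linarith) hBK
    linarith
  have ht'2 : t' < T' := lt_of_le_of_lt (min_le_left _ _) (by linarith)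
  refine ⟨t', ⟨ht'1, ht'2⟩, ?_⟩
  have hshift : ‖stateT U B T' t' u y₀ - stateT U B T' t₀ u y₀‖ ≤ ‖B‖ * K * (t' - t₀) :=
    error_shift hU hum hub ht'1.le ht'2
  have h2 : ‖B‖ * K * (t' - t₀) ≤ r - e := by
    have ht'le : t' - t₀ ≤ (r - e) / (‖B‖ * K + 1) := by
      have := min_le_right ((t₀ + T') / 2) (t₀ + (r - e) / (‖B‖ * K + 1))
      rw [← ht'def] at this
      linarith
    have hBKnn : 0 ≤ ‖B‖ * K := mul_nonneg (norm_nonneg _) hK0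
    calc ‖B‖ * K * (t' - t₀) ≤ (‖B‖ * K + 1) * ((r - e) / (‖B‖ * K + 1)) :=
          mul_le_mul (by linarith) ht'le (by linarith) (by linarith)
      _ = r - e := by field_simp
  have h1 : ‖stateT U B T' t' u y₀ - z_d‖ ≤
      ‖stateT U B T' t' u y₀ - stateT U B T' t₀ u y₀‖ + e := by
    rw [hedef]
    have : stateT U B T' t' u y₀ - z_d = (stateT U B T' t' u y₀ - stateT U B T' t₀ u y₀)
        + (stateT U B T' t₀ u y₀ - z_d) := by abel
    rw [this]; exact norm_add_le _ _
  linarith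

/-- Real Riesz representation on a complex Hilbert space. -/
lemma exists_eta (f : H →L[ℝ] ℝ) (hf : f ≠ 0) :
    ∃ η : H, η ≠ 0 ∧ ∀ x : H, Complex.re (inner ℂ η x : ℂ) = f x := by
  have hIsmul : ∀ (r : ℝ) (x : H), (r : ℂ) • x = r • x := fun r x => Complex.coe_smul r x
  have hJlin : ∀ (c : ℂ) (x : H), (Complex.I : ℂ) • (c • x) = c • ((Complex.I : ℂ) • x) := by
    intro c x; rw [smul_smul, mul_comm, ← smul_smul]
  have hII : ∀ x : H, (Complex.I : ℂ) • ((Complex.I : ℂ) • x) = -x := by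
    intro x; rw [smul_smul, Complex.I_mul_I, neg_one_smul]
  set gl : H →ₗ[ℂ] ℂ :=
    { toFun := fun x => (f x : ℂ) - Complex.I * (f ((Complex.I : ℂ) • x) : ℂ)
      map_add' := by
        intro x y
        simp only [smul_add, map_add]
        push_cast
        ring
      map_smul' := by
        intro c x
        simp only [RingHom.id_apply, smul_eq_mul]
        have h1 : c • x = c.re • x + c.im • ((Complex.I : ℂ) • x) := by
          rw [← hIsmul, ← hIsmul, smul_smul, ← add_smul]
          congr 1
          apply Complex.ext <;> simp
        have h2 : (Complex.I : ℂ) • (c • x) = c.re • ((Complex.I : ℂ) • x) - c.im • x := by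
          rw [h1, smul_add, ← hIsmul, ← hIsmul, ← hIsmul, ← hIsmul, hJlin, hJlin, hII]
          rw [smul_neg, sub_eq_add_neg]
        have e1 : f (c • x) = c.re * f x + c.im * f ((Complex.I : ℂ) • x) := by
          rw [h1, map_add, f.map_smul, f.map_smul]; simp [smul_eq_mul]
        have e2 : f ((Complex.I : ℂ) • (c • x)) =
            c.re * f ((Complex.I : ℂ) • x) - c.im * f x := by
          rw [h2, map_sub, f.map_smul, f.map_smul]; simp [smul_eq_mul]
        rw [e1, e2]
        rw [← Complex.re_add_im c]
        push_cast
        apply Complex.ext <;> simp <;> ring }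
  have hbound : ∃ C : ℝ, ∀ x : H, ‖gl x‖ ≤ C * ‖x‖ := by
    refine ⟨‖f‖ + ‖f‖, fun x => ?_⟩
    have h1 : ‖gl x‖ ≤ ‖(f x : ℂ)‖ + ‖Complex.I * (f ((Complex.I : ℂ) • x) : ℂ)‖ :=
      norm_sub_le _ _
    have h2 : ‖(f x : ℂ)‖ = |f x| := by simp [Complex.norm_real]
    have h3 : ‖Complex.I * (f ((Complex.I : ℂ) • x) : ℂ)‖ = |f ((Complex.I : ℂ) • x)| := by
      simp [Complex.norm_real]
    have h4 : |f x| ≤ ‖f‖ * ‖x‖ := f.le_opNorm x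
    have h5 : |f ((Complex.I : ℂ) • x)| ≤ ‖f‖ * ‖x‖ := by
      have := f.le_opNorm ((Complex.I : ℂ) • x)
      rwa [norm_smul, Complex.norm_I, one_mul] at this
    calc ‖gl x‖ ≤ |f x| + |f ((Complex.I : ℂ) • x)| := by rw [h2, h3] at h1; exact h1
      _ ≤ ‖f‖ * ‖x‖ + ‖f‖ * ‖x‖ := add_le_add h4 h5
      _ = (‖f‖ + ‖f‖) * ‖x‖ := by ring
  set g : H →L[ℂ] ℂ := gl.mkContinuousOfExistsBound hbound
  set η : H := (InnerProductSpace.toDual ℂ H).symm g with hηdef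
  have hinner : ∀ x : H, (inner ℂ η x : ℂ) = g x := fun x =>
    InnerProductSpace.toDual_symm_apply
  have hre : ∀ x : H, Complex.re (inner ℂ η x : ℂ) = f x := by
    intro x
    rw [hinner]
    show Complex.re ((f x : ℂ) - Complex.I * (f ((Complex.I : ℂ) • x) : ℂ)) = f x
    simp
  refine ⟨η, ?_, hre⟩
  intro hη0
  apply hf
  ext x
  have := hre x
  rw [hη0] at this
  simp only [inner_zero_left, Complex.zero_re] at this
  simpa using this.symm

end Helpers8
section Helpers9
set_option linter.unusedSectionVars false

variable {U : ℝ → H →L[ℂ] H} {B : H →L[ℂ] H}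

/-- The bang-bang property via Hahn–Banach separation and unique continuation. -/
lemma bangbang (hU : IsUnitaryGroup U) (hB : IsOrthProj B) (hUC : UC U B)
    {T' t₁ M r : ℝ} {y₀ z_d : H} {u : ℝ → H}
    (ht₁T : t₁ < T') (hM : 0 < M) (hr : 0 < r)
    (hum : AEStronglyMeasurable u (volume : Measure ℝ))
    (hub : ∀ᵐ s : ℝ ∂volume, s ∈ Ioo t₁ T' → ‖u s‖ ≤ M)
    (herr : ‖stateT U B T' t₁ u y₀ - z_d‖ ≤ r)
    (hdisj : ∀ g : ℝ → H, AEStronglyMeasurable g volume → (∀ s, s ∉ Ioo t₁ T' → g s = 0) →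
      (∀ᵐ s : ℝ ∂volume, s ∈ Ioo t₁ T' → ‖g s‖ ≤ M) →
      r ≤ ‖stateT U B T' t₁ g y₀ - z_d‖) :
    ∀ᵐ s : ℝ ∂volume, s ∈ Ioo t₁ T' → ‖u s‖ = M := by
  classical
  -- truncated control
  set u' : ℝ → H := (Ioo t₁ T').indicator u with hu'def
  have hu'm : AEStronglyMeasurable u' (volume : Measure ℝ) := hum.indicator measurableSet_Ioo
  have hu'eq : ∀ s ∈ Ioo t₁ T', u' s = u s := fun s hs => indicator_of_mem hs u
  have hu'b : ∀ᵐ s : ℝ ∂volume, s ∈ Ioo t₁ T' → ‖u' s‖ ≤ M :=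
    hub.mono fun s hs hm => by rw [hu'eq s hm]; exact hs hm
  have hu'state : stateT U B T' t₁ u' y₀ = stateT U B T' t₁ u y₀ :=
    stateT_congr_ae (MeasureTheory.ae_of_all _ fun s hs => (hu'eq s hs))
  -- admissible control class and reachable set
  set A : Set (ℝ → H) := {g | AEStronglyMeasurable g (volume : Measure ℝ) ∧
    (∀ s, s ∉ Ioo t₁ T' → g s = 0) ∧
    ∀ᵐ s : ℝ ∂volume, s ∈ Ioo t₁ T' → ‖g s‖ ≤ M} with hAdef
  set S : Set H := (fun g : ℝ → H => stateT U B T' t₁ g y₀) '' A with hSdef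
  have hu'A : u' ∈ A :=
    ⟨hu'm, fun s hs => indicator_of_notMem hs u, hu'b⟩
  have hSne : stateT U B T' t₁ u' y₀ ∈ S := ⟨u', hu'A, rfl⟩
  -- convexity of S
  have hSconv : Convex ℝ S := by
    rintro y₁ ⟨g₁, hg₁, rfl⟩ y₂ ⟨g₂, hg₂, rfl⟩ a b ha hb hab
    set g : ℝ → H := fun s => a • g₁ s + b • g₂ s with hgdef
    have hgm : AEStronglyMeasurable g (volume : Measure ℝ) :=
      (hg₁.1.const_smul a).add (hg₂.1.const_smul b)
    have hg0 : ∀ s, s ∉ Ioo t₁ T' → g s = 0 := fun s hs => by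
      rw [hgdef]
      simp only [hg₁.2.1 s hs, hg₂.2.1 s hs, smul_zero, add_zero]
    have hgb : ∀ᵐ s : ℝ ∂volume, s ∈ Ioo t₁ T' → ‖g s‖ ≤ M := by
      filter_upwards [hg₁.2.2, hg₂.2.2] with s h1 h2 hm
      calc ‖g s‖ ≤ ‖a • g₁ s‖ + ‖b • g₂ s‖ := norm_add_le _ _
        _ = a * ‖g₁ s‖ + b * ‖g₂ s‖ := by
            rw [norm_smul, norm_smul, Real.norm_eq_abs, Real.norm_eq_abs,
              abs_of_nonneg ha, abs_of_nonneg hb]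
        _ ≤ a * M + b * M := add_le_add (mul_le_mul_of_nonneg_left (h1 hm) ha)
            (mul_le_mul_of_nonneg_left (h2 hm) hb)
        _ = M := by rw [← add_mul, hab, one_mul]
    have hint1 : IntegrableOn (fun s => U (T' - s) (B (g₁ s))) (Ioo t₁ T') volume :=
      integrableOn_integrand hU B hg₁.1 hg₁.2.2
    have hint2 : IntegrableOn (fun s => U (T' - s) (B (g₂ s))) (Ioo t₁ T') volume :=
      integrableOn_integrand hU B hg₂.1 hg₂.2.2
    have hstate_g : stateT U B T' t₁ g y₀ =
        a • stateT U B T' t₁ g₁ y₀ + b • stateT U B T' t₁ g₂ y₀ := by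
      unfold stateT
      have hpt : ∀ s : ℝ, U (T' - s) (B (g s)) =
          a • (U (T' - s) (B (g₁ s))) + b • (U (T' - s) (B (g₂ s))) := by
        intro s
        rw [hgdef]
        simp only [map_add, B.map_smul_of_tower, (U (T' - s)).map_smul_of_tower]
      have h1 : IntegrableOn (fun s => a • (U (T' - s)) (B (g₁ s))) (Ioo t₁ T') volume :=
        hint1.smul a
      have h2 : IntegrableOn (fun s => b • (U (T' - s)) (B (g₂ s))) (Ioo t₁ T') volume :=
        hint2.smul b
      rw [MeasureTheory.setIntegral_congr_fun measurableSet_Ioo (fun s _ => hpt s),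
        MeasureTheory.integral_add h1 h2,
        MeasureTheory.integral_smul, MeasureTheory.integral_smul]
      have hcomb : a • (U T' y₀) + b • (U T' y₀) = U T' y₀ := by
        rw [← add_smul, hab, one_smul]
      rw [smul_add, smul_add]
      conv_lhs => rw [← hcomb]
      abel
    exact ⟨g, ⟨hgm, hg0, hgb⟩, by simpa using hstate_g⟩
  -- separation
  have hdisjoint : Disjoint (Metric.ball z_d r) S := by
    rw [Set.disjoint_left]
    rintro y hy ⟨g, hgA, rfl⟩
    have := hdisj g hgA.1 hgA.2.1 hgA.2.2
    rw [Metric.mem_ball, dist_eq_norm] at hy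
    exact absurd (lt_of_le_of_lt this hy) (lt_irrefl r)
  obtain ⟨f, s₀, hfO, hfS⟩ := geometric_hahn_banach_open
    (convex_ball z_d r) Metric.isOpen_ball hSconv hdisjoint
  set ystar : H := stateT U B T' t₁ u' y₀ with hystardef
  have hfy1 : s₀ ≤ f ystar := hfS _ hSne
  have hfy2 : f ystar ≤ s₀ := by
    have hcl : ystar ∈ closure (Metric.ball z_d r) := by
      rw [closure_ball z_d hr.ne', Metric.mem_closedBall, dist_eq_norm, hu'state]
      exact herr
    have hsub : closure (Metric.ball z_d r) ⊆ f ⁻¹' (Iic s₀) :=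
      closure_minimal (fun x hx => le_of_lt (hfO x hx)) (isClosed_Iic.preimage f.continuous)
    exact hsub hcl
  have hfystar : f ystar = s₀ := le_antisymm hfy2 hfy1
  have hfne : f ≠ 0 := by
    intro hf0
    have h1 : f z_d < s₀ := hfO z_d (Metric.mem_ball_self hr)
    rw [hf0] at h1 hfy1
    simp only [ContinuousLinearMap.zero_apply] at h1 hfy1
    linarith
  obtain ⟨η, hη0, hηre⟩ := exists_eta f hfne
  -- the adjoint trajectory
  set φ : ℝ → H := fun σ => B (U (σ - T') η) with hφdef
  have hφcont : Continuous φ :=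
    B.continuous.comp ((hU.2.2.2 η).comp (continuous_id.sub continuous_const))
  have hφbd : ∀ σ : ℝ, ‖φ σ‖ ≤ ‖B‖ * ‖η‖ := fun σ => by
    rw [hφdef]
    exact (B.le_opNorm _).trans (by rw [hU.norm_apply])
  set Z : Set ℝ := {σ | φ σ = 0} with hZdef
  have hZmeas : MeasurableSet Z := (isClosed_singleton.preimage hφcont).measurableSet
  have hZ0 : volume Z = 0 := by
    have hA₀ : IsClosed {t : ℝ | B (U t η) = 0} :=
      isClosed_singleton.preimage (B.continuous.comp (hU.2.2.2 η))
    have hpre : Z = (fun σ : ℝ => σ - T') ⁻¹' {t : ℝ | B (U t η) = 0} := rfl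
    rw [hpre, (measurePreserving_sub_right volume T').measure_preimage
      hA₀.measurableSet.nullMeasurableSet]
    exact hUC η hη0
  -- key pointwise identity
  have hkey : ∀ (σ : ℝ) (w : H), f (U (T' - σ) (B w)) = Complex.re (inner ℂ (φ σ) w : ℂ) := by
    intro σ w
    rw [← hηre]
    congr 1
    rw [hU.inner_shift]
    have harg : -(T' - σ) = σ - T' := by ring
    rw [harg, hφdef]
    exact (hB.2.2 (U (σ - T') η) w).symm
  -- value of f on reachable states
  have hstate_f : ∀ g ∈ A, f (stateT U B T' t₁ g y₀) =
      f (U T' y₀) + ∫ σ in Ioo t₁ T', Complex.re (inner ℂ (φ σ) (g σ) : ℂ) := by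
    rintro g ⟨hgm, _, hgb⟩
    unfold stateT
    rw [map_add]
    congr 1
    rw [← ContinuousLinearMap.integral_comp_comm f (integrableOn_integrand hU B hgm hgb)]
    exact MeasureTheory.setIntegral_congr_fun measurableSet_Ioo (fun σ _ => hkey σ (g σ))
  -- the competitor control
  set q : ℝ → H := fun σ => -((M / ‖φ σ‖) • φ σ) with hqdef
  have hqm : AEStronglyMeasurable q (volume : Measure ℝ) := by
    apply AEStronglyMeasurable.neg
    have := AEStronglyMeasurable.smul
      ((measurable_const.div hφcont.norm.measurable).aestronglyMeasurable)
      hφcont.aestronglyMeasurable (μ := (volume : Measure ℝ)) (f := fun σ => M / ‖φ σ‖)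
    exact this
  set gstar : ℝ → H := fun σ => (Ioo t₁ T' ∩ Zᶜ).indicator q σ + (Ioo t₁ T' ∩ Z).indicator u' σ
    with hgstardef
  have hgsm : AEStronglyMeasurable gstar (volume : Measure ℝ) :=
    (hqm.indicator (measurableSet_Ioo.inter hZmeas.compl)).add
      (hu'm.indicator (measurableSet_Ioo.inter hZmeas))
  have hqapp : ∀ σ : ℝ, q σ = -((M / ‖φ σ‖) • φ σ) := fun _ => rfl
  have hgsapp : ∀ s : ℝ, gstar s =
      (Ioo t₁ T' ∩ Zᶜ).indicator q s + (Ioo t₁ T' ∩ Z).indicator u' s := fun _ => rfl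
  have hgsvalZ : ∀ s ∈ Ioo t₁ T', s ∈ Z → gstar s = u' s := by
    intro s hm hsZ
    have h1 : s ∉ Ioo t₁ T' ∩ Zᶜ := fun h => h.2 hsZ
    have h2 : s ∈ Ioo t₁ T' ∩ Z := ⟨hm, hsZ⟩
    rw [hgsapp, Set.indicator_of_notMem h1, Set.indicator_of_mem h2, zero_add]
  have hgsvalq : ∀ s ∈ Ioo t₁ T', s ∉ Z → gstar s = q s := by
    intro s hm hsZ
    have h1 : s ∈ Ioo t₁ T' ∩ Zᶜ := ⟨hm, hsZ⟩
    have h2 : s ∉ Ioo t₁ T' ∩ Z := fun h => hsZ h.2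
    rw [hgsapp, Set.indicator_of_mem h1, Set.indicator_of_notMem h2, add_zero]
  have habs : ∀ z : ℂ, |z.re| ≤ ‖z‖ := fun z => by
    exact Complex.abs_re_le_norm z
  have hqnorm : ∀ σ, σ ∉ Z → ‖q σ‖ = M := by
    intro σ hσ
    have hφne : ‖φ σ‖ ≠ 0 := fun h => hσ (norm_eq_zero.1 h)
    rw [hqapp]
    rw [norm_neg, norm_smul, Real.norm_eq_abs]
    rw [abs_of_nonneg (div_nonneg hM.le (norm_nonneg _)), div_mul_cancel₀ _ hφne]
  have hgs0 : ∀ s, s ∉ Ioo t₁ T' → gstar s = 0 := by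
    intro s hs
    rw [hgsapp, indicator_of_notMem (fun h : s ∈ Ioo t₁ T' ∩ Zᶜ => hs h.1),
      indicator_of_notMem (fun h : s ∈ Ioo t₁ T' ∩ Z => hs h.1), add_zero]
  have hgsb : ∀ᵐ s : ℝ ∂volume, s ∈ Ioo t₁ T' → ‖gstar s‖ ≤ M := by
    filter_upwards [hu'b] with s hsu hm
    by_cases hsZ : s ∈ Z
    · rw [hgsvalZ s hm hsZ]; exact hsu hm
    · rw [hgsvalq s hm hsZ]; exact (hqnorm s hsZ).le
  have hgsA : gstar ∈ A := ⟨hgsm, hgs0, hgsb⟩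
  -- integral comparison
  set F₁ : ℝ → ℝ := fun σ => Complex.re (inner ℂ (φ σ) (u' σ) : ℂ) with hF₁def
  set F₂ : ℝ → ℝ := fun σ => Complex.re (inner ℂ (φ σ) (gstar σ) : ℂ) with hF₂def
  have hFm : ∀ (v : ℝ → H), AEStronglyMeasurable v (volume : Measure ℝ) →
      AEStronglyMeasurable (fun σ => Complex.re (inner ℂ (φ σ) (v σ) : ℂ)) (volume : Measure ℝ) :=
    fun v hv => Complex.continuous_re.comp_aestronglyMeasurable
      (hφcont.aestronglyMeasurable.inner hv)
  have hFbd : ∀ (v : ℝ → H), (∀ᵐ s : ℝ ∂volume, s ∈ Ioo t₁ T' → ‖v s‖ ≤ M) →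
      ∀ᵐ σ : ℝ ∂volume, σ ∈ Ioo t₁ T' →
        |Complex.re (inner ℂ (φ σ) (v σ) : ℂ)| ≤ ‖B‖ * ‖η‖ * M := by
    intro v hv
    filter_upwards [hv] with σ hσ hm
    calc |Complex.re (inner ℂ (φ σ) (v σ) : ℂ)| ≤ ‖(inner ℂ (φ σ) (v σ) : ℂ)‖ := habs _
      _ ≤ ‖φ σ‖ * ‖v σ‖ := norm_inner_le_norm _ _
      _ ≤ (‖B‖ * ‖η‖) * M := by
          apply mul_le_mul (hφbd σ) (hσ hm) (norm_nonneg _)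
          positivity
  have hFint : ∀ (v : ℝ → H), AEStronglyMeasurable v (volume : Measure ℝ) →
      (∀ᵐ s : ℝ ∂volume, s ∈ Ioo t₁ T' → ‖v s‖ ≤ M) →
      IntegrableOn (fun σ => Complex.re (inner ℂ (φ σ) (v σ) : ℂ)) (Ioo t₁ T') volume := by
    intro v hv hvb
    refine Integrable.mono' (g := fun _ => ‖B‖ * ‖η‖ * M) ?_ ((hFm v hv).restrict) ?_
    · exact integrableOn_const measure_Ioo_lt_top.ne
    · rw [ae_restrict_iff' measurableSet_Ioo]
      filter_upwards [hFbd v hvb] with σ hσ hm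
      rw [Real.norm_eq_abs]
      exact hσ hm
  have hF₁int : IntegrableOn F₁ (Ioo t₁ T') volume := hFint u' hu'm hu'b
  have hF₂int : IntegrableOn F₂ (Ioo t₁ T') volume := hFint gstar hgsm hgsb
  have hJle : (∫ σ in Ioo t₁ T', F₁ σ) ≤ ∫ σ in Ioo t₁ T', F₂ σ := by
    have h1 := hstate_f u' hu'A
    have h2 := hstate_f gstar hgsA
    have h3 : s₀ ≤ f (stateT U B T' t₁ gstar y₀) := hfS _ ⟨gstar, hgsA, rfl⟩
    rw [← hystardef] at h1
    rw [hfystar] at h1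
    rw [h2] at h3
    rw [← hF₁def] at h1
    rw [← hF₂def] at h3
    linarith
  -- pointwise comparison
  have hpt : ∀ᵐ σ : ℝ ∂(volume.restrict (Ioo t₁ T')), F₂ σ ≤ F₁ σ ∧
      (σ ∉ Z → F₂ σ = -(M * ‖φ σ‖)) := by
    rw [ae_restrict_iff' measurableSet_Ioo]
    filter_upwards [hu'b] with σ hσu hm
    have hqval : σ ∉ Z → Complex.re (inner ℂ (φ σ) (q σ) : ℂ) = -(M * ‖φ σ‖) := by
      intro hσZ
      have hφne : ‖φ σ‖ ≠ 0 := fun h => hσZ (norm_eq_zero.1 h)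
      rw [hqapp]
      have h1 : (inner ℂ (φ σ) (-((M / ‖φ σ‖) • φ σ)) : ℂ) =
          -(((M / ‖φ σ‖ : ℝ) : ℂ) * (inner ℂ (φ σ) (φ σ) : ℂ)) := by
        rw [inner_neg_right, ← Complex.coe_smul, inner_smul_right]
      rw [h1, Complex.neg_re, Complex.re_ofReal_mul]
      have h2 : (inner ℂ (φ σ) (φ σ) : ℂ).re = ‖φ σ‖ ^ 2 := by
        rw [← RCLike.re_to_complex]
        exact inner_self_eq_norm_sq (φ σ)
      rw [h2, sq, ← mul_assoc, div_mul_cancel₀ _ hφne]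
    by_cases hσZ : σ ∈ Z
    · constructor
      · have : F₂ σ = F₁ σ := by
          show Complex.re (inner ℂ (φ σ) (gstar σ) : ℂ) = Complex.re (inner ℂ (φ σ) (u' σ) : ℂ)
          rw [hgsvalZ σ hm hσZ]
        exact this.le
      · intro h; exact absurd hσZ h
    · have hF₂val : F₂ σ = -(M * ‖φ σ‖) := by
        show Complex.re (inner ℂ (φ σ) (gstar σ) : ℂ) = -(M * ‖φ σ‖)
        rw [hgsvalq σ hm hσZ]
        exact hqval hσZ
      refine ⟨?_, fun _ => hF₂val⟩
      rw [hF₂val]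
      have h1 : |Complex.re (inner ℂ (φ σ) (u' σ) : ℂ)| ≤ ‖φ σ‖ * ‖u' σ‖ :=
        (habs _).trans (norm_inner_le_norm _ _)
      have h2 : ‖φ σ‖ * ‖u' σ‖ ≤ ‖φ σ‖ * M :=
        mul_le_mul_of_nonneg_left (hσu hm) (norm_nonneg _)
      have h3 := (abs_le.1 h1).1
      have : -(M * ‖φ σ‖) ≤ Complex.re (inner ℂ (φ σ) (u' σ) : ℂ) := by nlinarith
      exact this
  -- equality a.e.
  have hd0 : ∀ᵐ σ : ℝ ∂(volume.restrict (Ioo t₁ T')), F₁ σ - F₂ σ = 0 := by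
    have hnn : 0 ≤ᶠ[ae (volume.restrict (Ioo t₁ T'))] fun σ => F₁ σ - F₂ σ :=
      hpt.mono fun σ hσ => by simp [sub_nonneg, hσ.1]
    have hint : Integrable (fun σ => F₁ σ - F₂ σ) (volume.restrict (Ioo t₁ T')) :=
      hF₁int.sub hF₂int
    have hle : (∫ σ in Ioo t₁ T', (F₁ σ - F₂ σ)) = 0 := by
      rw [MeasureTheory.integral_sub hF₁int hF₂int]
      have h2 : 0 ≤ ∫ σ in Ioo t₁ T', (F₁ σ - F₂ σ) :=
        MeasureTheory.integral_nonneg_of_ae hnn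
      rw [MeasureTheory.integral_sub hF₁int hF₂int] at h2
      linarith
    have := (MeasureTheory.integral_eq_zero_iff_of_nonneg_ae hnn hint).1 hle
    filter_upwards [this] with σ hσ
    exact hσ
  -- conclusion
  have hZae : ∀ᵐ σ : ℝ ∂(volume.restrict (Ioo t₁ T')), σ ∉ Z :=
    MeasureTheory.ae_restrict_of_ae (measure_eq_zero_iff_ae_notMem.1 hZ0)
  have hub' : ∀ᵐ σ : ℝ ∂(volume.restrict (Ioo t₁ T')), σ ∈ Ioo t₁ T' → ‖u σ‖ ≤ M :=
    MeasureTheory.ae_restrict_of_ae hub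
  have hmem : ∀ᵐ σ : ℝ ∂(volume.restrict (Ioo t₁ T')), σ ∈ Ioo t₁ T' :=
    MeasureTheory.ae_restrict_mem measurableSet_Ioo
  have hfinal : ∀ᵐ σ : ℝ ∂(volume.restrict (Ioo t₁ T')), ‖u σ‖ = M := by
    filter_upwards [hpt, hd0, hZae, hub', hmem] with σ h1 h2 h3 h4 h5
    have hF₂val : F₂ σ = -(M * ‖φ σ‖) := h1.2 h3
    have hF₁val : F₁ σ = -(M * ‖φ σ‖) := by
      have : F₁ σ = F₂ σ := by linarith [h2]
      rw [this, hF₂val]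
    have hφpos : 0 < ‖φ σ‖ := by
      rcases (norm_nonneg (φ σ)).lt_or_eq with h | h
      · exact h
      · exact absurd (norm_eq_zero.1 h.symm) h3
    have hu'σ : u' σ = u σ := hu'eq σ h5
    have h1' : |F₁ σ| ≤ ‖φ σ‖ * ‖u σ‖ := by
      have : F₁ σ = Complex.re (inner ℂ (φ σ) (u σ) : ℂ) := by
        show Complex.re (inner ℂ (φ σ) (u' σ) : ℂ) = _
        rw [hu'σ]
      rw [this]
      exact (habs _).trans (norm_inner_le_norm _ _)
    have hMle : M * ‖φ σ‖ ≤ ‖φ σ‖ * ‖u σ‖ := by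
      have : |F₁ σ| = M * ‖φ σ‖ := by
        rw [hF₁val, abs_neg, abs_of_nonneg (by positivity)]
      linarith [h1']
    have : M ≤ ‖u σ‖ := by
      have := (mul_le_mul_iff_right₀ hφpos).1 (by linarith [hMle] : ‖φ σ‖ * M ≤ ‖φ σ‖ * ‖u σ‖)
      exact this
    linarith [h4 h5]
  exact (ae_restrict_iff' measurableSet_Ioo).1 hfinal

end Helpers9
section Helpers10
set_option linter.unusedSectionVars false

variable {U : ℝ → H →L[ℂ] H} {B : H →L[ℂ] H}

lemma memLinfty_bound {u : ℝ → H} {T' τ : ℝ} (h : MemLinfty u 0 T') (hτ0 : 0 ≤ τ) :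
    ∃ c : ℝ, ∀ᵐ t : ℝ ∂volume, t ∈ Ioo τ T' → ‖u t‖ ≤ c := by
  obtain ⟨c, hc⟩ := h.2
  exact ⟨c, hc.mono fun t ht hm => ht ⟨hτ0.trans_lt hm.1, hm.2⟩⟩

/-- Truncating a control to `(b, T')` is the same as starting it at time `b`. -/
lemma stateT_indicator {u : ℝ → H} {T' a b : ℝ} {y₀ : H} (hab : a ≤ b) :
    stateT U B T' a ((Ioo b T').indicator u) y₀ = stateT U B T' b u y₀ := by
  unfold stateT
  congr 1
  have hpt : ∀ s : ℝ, U (T' - s) (B ((Ioo b T').indicator u s)) =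
      (Ioo b T').indicator (fun s => U (T' - s) (B (u s))) s := by
    intro s
    by_cases hs : s ∈ Ioo b T'
    · rw [indicator_of_mem hs, indicator_of_mem hs]
    · rw [indicator_of_notMem hs, indicator_of_notMem hs, map_zero, map_zero]
  rw [MeasureTheory.setIntegral_congr_fun measurableSet_Ioo (fun s _ => hpt s),
    MeasureTheory.setIntegral_indicator measurableSet_Ioo,
    Set.inter_eq_right.2 (Ioo_subset_Ioo hab le_rfl)]

/-- The state map is affine in the control. -/
lemma stateT_comb (hU : IsUnitaryGroup U) {u₁ u₂ : ℝ → H} {T' τ a b K₁ K₂ : ℝ} {y₀ : H}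
    (h1 : AEStronglyMeasurable u₁ (volume : Measure ℝ))
    (h2 : AEStronglyMeasurable u₂ (volume : Measure ℝ))
    (hb1 : ∀ᵐ s : ℝ ∂volume, s ∈ Ioo τ T' → ‖u₁ s‖ ≤ K₁)
    (hb2 : ∀ᵐ s : ℝ ∂volume, s ∈ Ioo τ T' → ‖u₂ s‖ ≤ K₂)
    (hab : a + b = 1) :
    stateT U B T' τ (fun s => a • u₁ s + b • u₂ s) y₀
      = a • stateT U B T' τ u₁ y₀ + b • stateT U B T' τ u₂ y₀ := by
  have hint1 : IntegrableOn (fun s => U (T' - s) (B (u₁ s))) (Ioo τ T') volume :=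
    integrableOn_integrand hU B h1 hb1
  have hint2 : IntegrableOn (fun s => U (T' - s) (B (u₂ s))) (Ioo τ T') volume :=
    integrableOn_integrand hU B h2 hb2
  unfold stateT
  have hpt : ∀ s : ℝ, U (T' - s) (B (a • u₁ s + b • u₂ s)) =
      a • (U (T' - s) (B (u₁ s))) + b • (U (T' - s) (B (u₂ s))) := by
    intro s
    simp only [map_add, B.map_smul_of_tower, (U (T' - s)).map_smul_of_tower]
  have ha1 : IntegrableOn (fun s => a • (U (T' - s)) (B (u₁ s))) (Ioo τ T') volume :=
    hint1.smul a
  have ha2 : IntegrableOn (fun s => b • (U (T' - s)) (B (u₂ s))) (Ioo τ T') volume :=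
    hint2.smul b
  rw [MeasureTheory.setIntegral_congr_fun measurableSet_Ioo (fun s _ => hpt s),
    MeasureTheory.integral_add ha1 ha2,
    MeasureTheory.integral_smul, MeasureTheory.integral_smul]
  have hcomb : a • (U T' y₀) + b • (U T' y₀) = U T' y₀ := by
    rw [← add_smul, hab, one_smul]
  rw [smul_add, smul_add]
  conv_lhs => rw [← hcomb]
  abel

/-- Uniform upper bound on admissible starting times:
any time from which the ball is reachable with norm `≤ M` is at most `T - γ`. -/
lemma sigma_le_of_err (hU : IsUnitaryGroup U) {T' σ r M : ℝ} {y₀ z_d : H} {v : ℝ → H}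
    (hσT : σ < T') (hM : 0 < M) (hB0 : 0 < ‖B‖)
    (hvb : ∀ᵐ s : ℝ ∂volume, s ∈ Ioo σ T' → ‖v s‖ ≤ M)
    (herr : ‖stateT U B T' σ v y₀ - z_d‖ ≤ r) (hr : r < ‖U T' y₀ - z_d‖) :
    σ ≤ T' - (‖U T' y₀ - z_d‖ - r) / (‖B‖ * M) := by
  have hIle : ‖∫ s in Ioo σ T', U (T' - s) (B (v s))‖ ≤ ‖B‖ * M * (T' - σ) :=
    norm_setIntegral_integrand_le hU hvb hσT.le
  have hrT : ‖U T' y₀ - z_d‖ ≤ r + ‖B‖ * M * (T' - σ) := by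
    have heq : U T' y₀ - z_d = (stateT U B T' σ v y₀ - z_d) -
        (∫ s in Ioo σ T', U (T' - s) (B (v s))) := by
      unfold stateT; abel
    rw [heq]
    exact (norm_sub_le _ _).trans (add_le_add herr hIle)
  have h2 : (‖U T' y₀ - z_d‖ - r) / (‖B‖ * M) ≤ T' - σ := by
    rw [div_le_iff₀ (by positivity)]
    nlinarith [hrT]
  linarith

/-- Part-(i) core: every admissible control for `(TP)^{M,r}` with `M = M(τ,r)` has
`τ_{M,r} ≤ τ`. -/
lemma tauOf_le_tau (hU : IsUnitaryGroup U) (hEC : EC U B) {T' τ r M : ℝ} {y₀ z_d : H}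
    (hτ0 : 0 ≤ τ) (hτT : τ < T') (hM : 0 < M) (hr : 0 < r) (hrT : r < ‖U T' y₀ - z_d‖)
    (hMNP : MNP U B y₀ z_d T' τ r = M) :
    ∀ v ∈ VadmSet U B y₀ z_d T' M r, tauOf U B y₀ z_d T' r v ≤ τ := by
  rintro v ⟨τv, hτv, ⟨hvL, hvb⟩, hverr⟩
  refine Real.sSup_le ?_ hτ0
  rintro σ ⟨⟨hσ0, hσT⟩, hσerr⟩
  by_contra hστ
  push_neg at hστ
  rcases le_or_gt τv σ with hc | hc
  · have hvb' : ∀ᵐ s : ℝ ∂volume, s ∈ Ioo σ T' → ‖v s‖ ≤ M :=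
      hvb.mono fun s hs hm => hs ⟨hc.trans_lt hm.1, hm.2⟩
    have := MNP_lt_of_reachable hU hEC hτ0 hστ hσT hM hr hrT hvL.1 hvb' hσerr
    rw [hMNP] at this
    exact absurd this (lt_irrefl M)
  · have := MNP_lt_of_reachable hU hEC hτ0 (hστ.trans hc) hτv.2 hM hr hrT hvL.1 hvb hverr
    rw [hMNP] at this
    exact absurd this (lt_irrefl M)

end Helpers10
theorem np_tp_equivalence
    (U : ℝ → H →L[ℂ] H) (B : H →L[ℂ] H) (hU : IsUnitaryGroup U) (hB : IsOrthProj B)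
    (hEC : EC U B) (hECrev : EC (fun t => U (-t)) B)
    (hUC : UC U B)
    (T : ℝ) (hT : 0 < T) (y₀ z_d : H) (hrT : 0 < ‖U T y₀ - z_d‖) :
    (∀ τ ∈ Ico (0 : ℝ) T, ∀ r ∈ Ioo (0 : ℝ) ‖U T y₀ - z_d‖,
      ∀ u : ℝ → H, IsOptNP U B y₀ z_d T τ r u → IsOptTP U B y₀ z_d T (MNP U B y₀ z_d T τ r) r u) ∧
    (∀ r ∈ Ioo (0 : ℝ) ‖U T y₀ - z_d‖, ∀ M : ℝ, MNP U B y₀ z_d T 0 r ≤ M →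
      (∀ u : ℝ → H, IsOptTP U B y₀ z_d T M r u → IsOptNP U B y₀ z_d T (tauTP U B y₀ z_d T M r) r u) ∧
      (∀ u : ℝ → H, IsOptTP U B y₀ z_d T M r u →
        ∀ᵐ t : ℝ ∂volume, t ∈ Ioo (tauTP U B y₀ z_d T M r) T → ‖u t‖ = M) ∧
      (∀ u₁ u₂ : ℝ → H, IsOptTP U B y₀ z_d T M r u₁ → IsOptTP U B y₀ z_d T M r u₂ →
        ∀ᵐ t : ℝ ∂volume, t ∈ Ioo (tauTP U B y₀ z_d T M r) T → u₁ t = u₂ t)) := by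
  have hBpos : 0 < ‖B‖ := norm_pos_iff.mpr hB.1
  constructor
  · -- Part (i)
    rintro τ ⟨hτ0, hτT⟩ r ⟨hr0, hrrT⟩ u hu
    obtain ⟨⟨huL, huerr⟩, husup⟩ := hu
    set M := MNP U B y₀ z_d T τ r with hMdef
    have hM0 : 0 < M := by
      have hm₀ : 0 < (‖U T y₀ - z_d‖ - r) / (‖B‖ * (T - τ)) :=
        div_pos (by linarith) (mul_pos hBpos (by linarith))
      refine lt_of_lt_of_le hm₀ (le_csInf ⟨supNorm u τ T, ⟨u, ⟨huL, huerr⟩, rfl⟩⟩ ?_)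
      rintro x ⟨w, hw, rfl⟩
      exact supNorm_lower_bound hU hw.1.1 (memLinfty_bound hw.1 hτ0) hτT hw.2
    have hbd := memLinfty_bound huL hτ0
    have huMb : ∀ᵐ t : ℝ ∂volume, t ∈ Ioo τ T → ‖u t‖ ≤ M := by
      have h := ae_le_supNorm hbd
      rw [husup] at h
      exact h
    have huV : u ∈ VadmSet U B y₀ z_d T M r := ⟨τ, ⟨hτ0, hτT⟩, ⟨huL, huMb⟩, huerr⟩
    have hle : ∀ v ∈ VadmSet U B y₀ z_d T M r, tauOf U B y₀ z_d T r v ≤ τ :=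
      tauOf_le_tau hU hEC hτ0 hτT hM0 hr0 hrrT hMdef.symm
    have hτle : τ ≤ tauOf U B y₀ z_d T r u :=
      le_csSup ⟨T, fun x hx => hx.1.2.le⟩ ⟨⟨hτ0, hτT⟩, huerr⟩
    have hbddImg : BddAbove (tauOf U B y₀ z_d T r '' VadmSet U B y₀ z_d T M r) :=
      ⟨τ, by rintro x ⟨v, hv, rfl⟩; exact hle v hv⟩
    have htauTP : tauTP U B y₀ z_d T M r = τ := by
      apply le_antisymm
      · exact Real.sSup_le (by rintro x ⟨v, hv, rfl⟩; exact hle v hv) hτ0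
      · exact hτle.trans (le_csSup hbddImg ⟨u, huV, rfl⟩)
    exact ⟨huV, by rw [htauTP]; exact huerr⟩
  · -- Part (ii)
    rintro r ⟨hr0, hrrT⟩ M hMge
    set t₁ := tauTP U B y₀ z_d T M r with ht₁def
    have hbddS : ∀ v : ℝ → H,
        BddAbove {τ' | τ' ∈ Ico (0:ℝ) T ∧ ‖stateT U B T τ' v y₀ - z_d‖ ≤ r} :=
      fun v => ⟨T, fun x hx => hx.1.2.le⟩
    have htauOf_le_T : ∀ v : ℝ → H, tauOf U B y₀ z_d T r v ≤ T :=
      fun v => Real.sSup_le (fun x hx => hx.1.2.le) hT.le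
    have hbddImg : BddAbove (tauOf U B y₀ z_d T r '' VadmSet U B y₀ z_d T M r) :=
      ⟨T, by rintro x ⟨v, hv, rfl⟩; exact htauOf_le_T v⟩
    have key : ∀ u : ℝ → H, IsOptTP U B y₀ z_d T M r u →
        (0 ≤ t₁ ∧ t₁ < T ∧ (∀ᵐ s : ℝ ∂volume, s ∈ Ioo t₁ T → ‖u s‖ ≤ M) ∧ 0 < M) ∧
        IsOptNP U B y₀ z_d T t₁ r u ∧
        (∀ᵐ s : ℝ ∂volume, s ∈ Ioo t₁ T → ‖u s‖ = M) := by
      rintro u ⟨⟨τw, hτw, ⟨huL, hub⟩, huerr⟩, herr₁⟩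
      rw [← ht₁def] at herr₁
      -- positivity of M
      have hM0 : 0 < M := by
        set w₀ : ℝ → H := (Ioo τw T).indicator u with hw₀def
        have hw₀L : MemLinfty w₀ 0 T := by
          refine ⟨huL.1.indicator measurableSet_Ioo, max M 0, ?_⟩
          filter_upwards [hub] with s hs _
          by_cases hsm : s ∈ Ioo τw T
          · rw [hw₀def, indicator_of_mem hsm]; exact (hs hsm).trans (le_max_left _ _)
          · rw [hw₀def, indicator_of_notMem hsm, norm_zero]; exact le_max_right _ _
        have hw₀err : ‖stateT U B T 0 w₀ y₀ - z_d‖ ≤ r := by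
          rw [hw₀def, stateT_indicator hτw.1]; exact huerr
        have hm₀pos : 0 < (‖U T y₀ - z_d‖ - r) / (‖B‖ * (T - 0)) :=
          div_pos (by linarith) (mul_pos hBpos (by linarith))
        have hpos : 0 < MNP U B y₀ z_d T 0 r := by
          refine lt_of_lt_of_le hm₀pos
            (le_csInf ⟨supNorm w₀ 0 T, ⟨w₀, ⟨hw₀L, hw₀err⟩, rfl⟩⟩ ?_)
          rintro x ⟨w, hw, rfl⟩
          exact supNorm_lower_bound hU hw.1.1 (memLinfty_bound hw.1 le_rfl) hT hw.2
        linarith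
      -- uniform bound on admissible times
      set γ := (‖U T y₀ - z_d‖ - r) / (‖B‖ * M) with hγdef
      have hγ0 : 0 < γ := div_pos (by linarith) (by positivity)
      have hσle : ∀ v ∈ VadmSet U B y₀ z_d T M r, tauOf U B y₀ z_d T r v ≤ T - γ := by
        rintro v ⟨τv, hτv, ⟨hvL, hvb⟩, hverr⟩
        have hτvle : τv ≤ T - γ := sigma_le_of_err hU hτv.2 hM0 hBpos hvb hverr hrrT
        refine Real.sSup_le ?_ (by linarith [hτv.1])
        rintro σ ⟨⟨hσ0, hσT⟩, hσerr⟩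
        rcases le_or_gt σ τv with hc | hc
        · linarith
        · exact sigma_le_of_err hU hσT hM0 hBpos
            (hvb.mono fun s hs hm => hs ⟨hc.trans hm.1, hm.2⟩) hσerr hrrT
      have huV : u ∈ VadmSet U B y₀ z_d T M r := ⟨τw, hτw, ⟨huL, hub⟩, huerr⟩
      have hτw_tau : τw ≤ tauOf U B y₀ z_d T r u := le_csSup (hbddS u) ⟨hτw, huerr⟩
      have hTγ0 : 0 ≤ T - γ := hτw.1.trans (hτw_tau.trans (hσle u huV))
      have ht₁ub : t₁ ≤ T - γ := by
        rw [ht₁def]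
        exact Real.sSup_le (by rintro x ⟨v, hv, rfl⟩; exact hσle v hv) hTγ0
      have ht₁T : t₁ < T := by linarith
      have hτwt₁ : τw ≤ t₁ := by
        rw [ht₁def]
        exact hτw_tau.trans (le_csSup hbddImg ⟨u, huV, rfl⟩)
      have ht₁0 : 0 ≤ t₁ := hτw.1.trans hτwt₁
      have hub₁ : ∀ᵐ s : ℝ ∂volume, s ∈ Ioo t₁ T → ‖u s‖ ≤ M :=
        hub.mono fun s hs hm => hs ⟨hτwt₁.trans_lt hm.1, hm.2⟩
      have hsup_le : supNorm u t₁ T ≤ M := supNorm_le hM0.le hub₁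
      have huW : u ∈ WadmSet U B y₀ z_d T t₁ r := ⟨huL, herr₁⟩
      have hbddBelow : BddBelow ((fun v : ℝ → H => supNorm v t₁ T) ''
          WadmSet U B y₀ z_d T t₁ r) :=
        ⟨0, by rintro x ⟨w, _, rfl⟩; exact supNorm_nonneg _ _ _⟩
      have hstar : ∀ v ∈ WadmSet U B y₀ z_d T t₁ r, M ≤ supNorm v t₁ T := by
        intro v hv
        by_contra hNM
        push_neg at hNM
        have hN0 : 0 ≤ supNorm v t₁ T := supNorm_nonneg _ _ _
        have hvb : ∀ᵐ s : ℝ ∂volume, s ∈ Ioo t₁ T → ‖v s‖ ≤ supNorm v t₁ T :=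
          ae_le_supNorm (memLinfty_bound hv.1 ht₁0)
        obtain ⟨w, t', ht', hwV, hwerr⟩ := exists_later_reach hU hEC ht₁0 ht₁T hM0 hr0
          hrrT hN0 hNM hv.1.1 hvb hv.2
        have h1 : t' ≤ tauOf U B y₀ z_d T r w :=
          le_csSup (hbddS w) ⟨⟨ht₁0.trans ht'.1.le, ht'.2⟩, hwerr⟩
        have h2 : tauOf U B y₀ z_d T r w ≤ t₁ := by
          rw [ht₁def]; exact le_csSup hbddImg ⟨w, hwV, rfl⟩
        linarith [ht'.1]
      have hMNP₁ : MNP U B y₀ z_d T t₁ r = M := by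
        apply le_antisymm
        · exact (csInf_le hbddBelow ⟨u, huW, rfl⟩).trans hsup_le
        · exact le_csInf ⟨_, ⟨u, huW, rfl⟩⟩ (by rintro x ⟨v, hv, rfl⟩; exact hstar v hv)
      have hsup_eq : supNorm u t₁ T = M := le_antisymm hsup_le (hstar u huW)
      have hdisjprop : ∀ g : ℝ → H, AEStronglyMeasurable g (volume : Measure ℝ) →
          (∀ s, s ∉ Ioo t₁ T → g s = 0) →
          (∀ᵐ s : ℝ ∂volume, s ∈ Ioo t₁ T → ‖g s‖ ≤ M) →
          r ≤ ‖stateT U B T t₁ g y₀ - z_d‖ := by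
        intro g hgm hg0 hgb
        by_contra hlt
        push_neg at hlt
        obtain ⟨t', ht'mem, ht'err⟩ := exists_later_of_strict hU ht₁T hM0.le hgm hgb hlt
        have hgL : MemLinfty g 0 T := by
          refine ⟨hgm, max M 0, ?_⟩
          filter_upwards [hgb] with s hs _
          by_cases hsm : s ∈ Ioo t₁ T
          · exact (hs hsm).trans (le_max_left _ _)
          · rw [hg0 s hsm, norm_zero]; exact le_max_right _ _
        have hgV : g ∈ VadmSet U B y₀ z_d T M r :=
          ⟨t', ⟨ht₁0.trans ht'mem.1.le, ht'mem.2⟩,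
            ⟨hgL, hgb.mono fun s hs hm => hs ⟨ht'mem.1.trans hm.1, hm.2⟩⟩, ht'err⟩
        have h1 : t' ≤ tauOf U B y₀ z_d T r g :=
          le_csSup (hbddS g) ⟨⟨ht₁0.trans ht'mem.1.le, ht'mem.2⟩, ht'err⟩
        have h2 : tauOf U B y₀ z_d T r g ≤ t₁ := by
          rw [ht₁def]; exact le_csSup hbddImg ⟨g, hgV, rfl⟩
        linarith [ht'mem.1]
      have hbb := bangbang hU hB hUC ht₁T hM0 hr0 huL.1 hub₁ herr₁ hdisjprop
      refine ⟨⟨ht₁0, ht₁T, hub₁, hM0⟩, ⟨huW, ?_⟩, hbb⟩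
      rw [hsup_eq, hMNP₁]
    refine ⟨fun u hu => (key u hu).2.1, fun u hu => (key u hu).2.2, ?_⟩
    intro u₁ u₂ h1 h2
    obtain ⟨⟨ht₁0, ht₁T, hub₁, hM0⟩, _, hbb₁⟩ := key u₁ h1
    obtain ⟨⟨_, _, hub₂, _⟩, _, hbb₂⟩ := key u₂ h2
    obtain ⟨τ₁, hτ₁, ⟨h1L, h1b⟩, h1err⟩ := h1.1
    obtain ⟨τ₂, hτ₂, ⟨h2L, h2b⟩, h2err⟩ := h2.1
    set ua : ℝ → H := fun s => (1/2 : ℝ) • u₁ s + (1/2 : ℝ) • u₂ s with huadef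
    have huaM : AEStronglyMeasurable ua (volume : Measure ℝ) :=
      (h1L.1.const_smul _).add (h2L.1.const_smul _)
    have huaL : MemLinfty ua 0 T := by
      obtain ⟨c₁, hc₁⟩ := h1L.2
      obtain ⟨c₂, hc₂⟩ := h2L.2
      refine ⟨huaM, (c₁ + c₂) / 2, ?_⟩
      filter_upwards [hc₁, hc₂] with s hs1 hs2 hm
      calc ‖ua s‖ ≤ ‖(1/2 : ℝ) • u₁ s‖ + ‖(1/2 : ℝ) • u₂ s‖ := norm_add_le _ _
        _ = (1/2) * ‖u₁ s‖ + (1/2) * ‖u₂ s‖ := by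
            rw [norm_smul, norm_smul, Real.norm_eq_abs,
              abs_of_pos (by norm_num : (0:ℝ) < 1/2)]
        _ ≤ (c₁ + c₂) / 2 := by linarith [hs1 hm, hs2 hm]
    have huab : ∀ᵐ s : ℝ ∂volume, s ∈ Ioo t₁ T → ‖ua s‖ ≤ M := by
      filter_upwards [hub₁, hub₂] with s hs1 hs2 hm
      calc ‖ua s‖ ≤ ‖(1/2 : ℝ) • u₁ s‖ + ‖(1/2 : ℝ) • u₂ s‖ := norm_add_le _ _
        _ = (1/2) * ‖u₁ s‖ + (1/2) * ‖u₂ s‖ := by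
            rw [norm_smul, norm_smul, Real.norm_eq_abs,
              abs_of_pos (by norm_num : (0:ℝ) < 1/2)]
        _ ≤ M := by linarith [hs1 hm, hs2 hm]
    have h1err₁ : ‖stateT U B T t₁ u₁ y₀ - z_d‖ ≤ r := by rw [ht₁def]; exact h1.2
    have h2err₁ : ‖stateT U B T t₁ u₂ y₀ - z_d‖ ≤ r := by rw [ht₁def]; exact h2.2
    have hstate_a : stateT U B T t₁ ua y₀ =
        (1/2 : ℝ) • stateT U B T t₁ u₁ y₀ + (1/2 : ℝ) • stateT U B T t₁ u₂ y₀ :=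
      stateT_comb hU h1L.1 h2L.1 hub₁ hub₂ (by norm_num)
    have huaerr : ‖stateT U B T t₁ ua y₀ - z_d‖ ≤ r := by
      rw [hstate_a]
      have heq : (1/2 : ℝ) • stateT U B T t₁ u₁ y₀ + (1/2 : ℝ) • stateT U B T t₁ u₂ y₀ - z_d
          = (1/2 : ℝ) • (stateT U B T t₁ u₁ y₀ - z_d)
            + (1/2 : ℝ) • (stateT U B T t₁ u₂ y₀ - z_d) := by module
      rw [heq]
      calc ‖(1/2 : ℝ) • (stateT U B T t₁ u₁ y₀ - z_d)
            + (1/2 : ℝ) • (stateT U B T t₁ u₂ y₀ - z_d)‖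
          ≤ ‖(1/2 : ℝ) • (stateT U B T t₁ u₁ y₀ - z_d)‖
            + ‖(1/2 : ℝ) • (stateT U B T t₁ u₂ y₀ - z_d)‖ := norm_add_le _ _
        _ = (1/2) * ‖stateT U B T t₁ u₁ y₀ - z_d‖
            + (1/2) * ‖stateT U B T t₁ u₂ y₀ - z_d‖ := by
            rw [norm_smul, norm_smul, Real.norm_eq_abs,
              abs_of_pos (by norm_num : (0:ℝ) < 1/2)]
        _ ≤ r := by linarith [h1err₁, h2err₁]
    have huaOpt : IsOptTP U B y₀ z_d T M r ua := by
      refine ⟨⟨t₁, ⟨ht₁0, ht₁T⟩, ⟨huaL, huab⟩, huaerr⟩, ?_⟩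
      rw [← ht₁def]
      exact huaerr
    obtain ⟨_, _, hbba⟩ := key ua huaOpt
    filter_upwards [hbb₁, hbb₂, hbba] with s hs1 hs2 hsa hm
    have e1 : ‖u₁ s‖ = M := hs1 hm
    have e2 : ‖u₂ s‖ = M := hs2 hm
    have ea : ‖ua s‖ = M := hsa hm
    have hsum : ‖u₁ s + u₂ s‖ = 2 * M := by
      have heq : u₁ s + u₂ s = (2 : ℝ) • (ua s) := by
        show u₁ s + u₂ s = (2 : ℝ) • ((1/2 : ℝ) • u₁ s + (1/2 : ℝ) • u₂ s)
        module
      rw [heq, norm_smul, Real.norm_eq_abs, ea]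
      norm_num
    have hpar := parallelogram_law_with_norm ℂ (u₁ s) (u₂ s)
    rw [hsum, e1, e2] at hpar
    have hz : ‖u₁ s - u₂ s‖ = 0 := by nlinarith [norm_nonneg (u₁ s - u₂ s)]
    exact sub_eq_zero.1 (norm_eq_zero.1 hz)
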